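/- arXiv:1801.03675 — 6 statements merged into one kernel-verified Lean document; each statement's English description precedes it below -/
import Mathlib

section
/- Let κ > 0, ω_d ∈ ℝ and ξ ∈ L¹(ℝ, ℂ). Define ν(t) = ξ(t) − κ ∫_{−∞}^{t} e^{−(κ/2 + i·ω_d)(t − r)} ξ(r) dr. Then ν ∈ L¹(ℝ, ℂ) and for every ω ∈ ℝ: ∫_{−∞}^{∞} e^{−i ω t} ν(t) dt = ((iω + i·ω_d − κ/2)/(iω + i·ω_d + κ/2)) · ∫_{−∞}^{∞} e^{−i ω t} ξ(t) dt. -/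
open MeasureTheory Complex Set Filter Topology

lemma aux_exp_integrableOn {c : ℂ} (hc : 0 < c.re) :
    IntegrableOn (fun s : ℝ => Complex.exp (-(c * s))) (Set.Ioi (0:ℝ)) := by
  refine Integrable.mono' (exp_neg_integrableOn_Ioi 0 hc) ?_ ?_
  · exact (Complex.continuous_exp.comp
      ((continuous_const.mul Complex.continuous_ofReal).neg)).aestronglyMeasurable
  · filter_upwards with s
    rw [Complex.norm_exp]
    simp [Complex.mul_re]

lemma aux_exp_integral {c : ℂ} (hc : 0 < c.re) :
    ∫ s in Set.Ioi (0:ℝ), Complex.exp (-(c * s)) = 1 / c := by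
  have hne : c ≠ 0 := fun h => by simp [h] at hc
  have hderiv : ∀ x ∈ Set.Ici (0:ℝ),
      HasDerivAt (fun x : ℝ => -Complex.exp (-(c * x)) / c) (Complex.exp (-(c * x))) x := by
    intro x _
    have h1 : HasDerivAt (fun z : ℂ => -Complex.exp (-(c * z)) / c)
        (Complex.exp (-(c * x))) (x : ℂ) := by
      have h2 : HasDerivAt (fun z : ℂ => -(c * z)) (-c) (x : ℂ) := by
        simpa using ((hasDerivAt_id (x:ℂ)).const_mul c).fun_neg
      have h3 := (h2.cexp).fun_neg.div_const c
      rw [show Complex.exp (-(c * x)) = -(Complex.exp (-(c * x)) * -c) / c by field_simp]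
      exact h3
    exact h1.comp_ofReal
  have htend : Tendsto (fun x : ℝ => -Complex.exp (-(c * x)) / c) atTop (𝓝 0) := by
    rw [tendsto_zero_iff_norm_tendsto_zero]
    have : (fun x : ℝ => ‖-Complex.exp (-(c * x)) / c‖)
        = fun x : ℝ => Real.exp (-(c.re * x)) / ‖c‖ := by
      funext x
      rw [norm_div, norm_neg, Complex.norm_exp]
      simp [Complex.mul_re]
    rw [this]
    have := (Real.tendsto_exp_atBot.comp
      (tendsto_neg_atBot_iff.mpr (tendsto_id.const_mul_atTop hc))).div_const ‖c‖
    simpa using this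
  have := integral_Ioi_of_hasDerivAt_of_tendsto' hderiv (aux_exp_integrableOn hc) htend
  rw [this]
  simp [neg_div]

theorem stmt_3 (κ ω_d : ℝ) (hκ : 0 < κ) (ξ : ℝ → ℂ) (hξ : Integrable ξ)
    (ν : ℝ → ℂ)
    (hν : ∀ t : ℝ, ν t = ξ t - (κ : ℂ) *
      ∫ r in Set.Iic t,
        Complex.exp (-((κ : ℂ) / 2 + Complex.I * (ω_d : ℂ)) * ((t : ℂ) - (r : ℂ))) * ξ r) :
    Integrable ν ∧
    ∀ ω : ℝ, (∫ t : ℝ, Complex.exp (-(Complex.I * (ω : ℂ) * (t : ℂ))) * ν t)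
      = ((Complex.I * (ω : ℂ) + Complex.I * (ω_d : ℂ) - (κ : ℂ) / 2) /
          (Complex.I * (ω : ℂ) + Complex.I * (ω_d : ℂ) + (κ : ℂ) / 2)) *
        ∫ t : ℝ, Complex.exp (-(Complex.I * (ω : ℂ) * (t : ℂ))) * ξ t := by
  set a : ℂ := (κ : ℂ) / 2 + Complex.I * (ω_d : ℂ) with ha
  have hare : a.re = κ / 2 := by simp [ha]
  set g : ℝ → ℂ := Set.indicator (Set.Ici (0:ℝ)) (fun s : ℝ => Complex.exp (-(a * s))) with hg
  have hg_int : Integrable g := by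
    rw [hg, integrable_indicator_iff measurableSet_Ici]
    exact Iff.mpr integrableOn_Ici_iff_integrableOn_Ioi
      (aux_exp_integrableOn (by rw [hare]; positivity))
  have hconv_prod : Integrable (fun p : ℝ × ℝ => ξ p.2 * g (p.1 - p.2))
      ((volume : Measure ℝ).prod volume) :=
    hξ.convolution_integrand (ContinuousLinearMap.mul ℂ ℂ) hg_int
  have hconv_int : Integrable (fun t : ℝ => ∫ r : ℝ, ξ r * g (t - r)) :=
    hconv_prod.integral_prod_left
  have hν_eq : ∀ t : ℝ, ν t = ξ t - (κ : ℂ) * ∫ r : ℝ, ξ r * g (t - r) := by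
    intro t
    rw [hν t]
    congr 1
    congr 1
    rw [← integral_indicator measurableSet_Iic]
    congr 1
    funext r
    by_cases hr : r ≤ t
    · have h0 : (0:ℝ) ≤ t - r := by linarith
      simp only [Set.indicator_of_mem (Set.mem_Iic.mpr hr), hg,
        Set.indicator_of_mem (Set.mem_Ici.mpr h0)]
      rw [mul_comm]
      congr 1
      congr 1
      push_cast
      ring
    · have h0 : ¬ ((0:ℝ) ≤ t - r) := by intro h; exact hr (by linarith)
      simp only [Set.indicator_of_notMem (fun h => hr (Set.mem_Iic.mp h)), hg,
        Set.indicator_of_notMem (fun h => h0 (Set.mem_Ici.mp h)), mul_zero]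
  have hν_int : Integrable ν :=
    (hξ.sub (hconv_int.const_mul (κ : ℂ))).congr
      (Filter.Eventually.of_forall fun t => (hν_eq t).symm)
  refine ⟨hν_int, fun ω => ?_⟩
  set b : ℂ := Complex.I * (ω : ℂ) with hb
  set e : ℝ → ℂ := fun t : ℝ => Complex.exp (-(b * t)) with he
  have hebound : ∀ t : ℝ, ‖e t‖ ≤ 1 := by
    intro t
    rw [he, Complex.norm_exp]
    simp [hb, Complex.mul_re]
  have hemeas : Continuous e := by
    rw [he]; exact Complex.continuous_exp.comp
      ((continuous_const.mul Complex.continuous_ofReal).neg)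
  have hd_re : (a + b).re = κ / 2 := by simp [hb, hare]
  have hd_pos : 0 < (a + b).re := by rw [hd_re]; positivity
  have hd_ne : a + b ≠ 0 := fun h => by rw [h] at hd_pos; simp at hd_pos
  -- key convolution Fourier computation
  have hprod2 : Integrable (fun p : ℝ × ℝ => e p.1 * (ξ p.2 * g (p.1 - p.2)))
      ((volume : Measure ℝ).prod volume) := by
    refine hconv_prod.bdd_mul (c := 1) ?_ (Filter.Eventually.of_forall fun p => hebound p.1)
    exact (hemeas.comp continuous_fst).aestronglyMeasurable
  have hkernel : ∀ r : ℝ, ∫ t : ℝ, e t * g (t - r) = e r * (1 / (a + b)) := by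
    intro r
    have hsplit : ∀ t : ℝ, e t * g (t - r)
        = e r * (Complex.exp (-(b * ((t - r : ℝ) : ℂ))) * g (t - r)) := by
      intro t
      rw [he]
      simp only
      rw [← mul_assoc, ← Complex.exp_add]
      congr 2
      push_cast
      ring
    simp_rw [hsplit]
    rw [integral_const_mul]
    have hk : (fun s : ℝ => Complex.exp (-(b * (s : ℂ))) * g s)
        = Set.indicator (Set.Ici (0:ℝ)) (fun s : ℝ => Complex.exp (-((a + b) * s))) := by
      funext s
      by_cases hs : (0:ℝ) ≤ s
      · simp only [hg, Set.indicator_of_mem (Set.mem_Ici.mpr hs)]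
        rw [← Complex.exp_add]
        congr 1
        ring
      · simp only [hg, Set.indicator_of_notMem (fun h => hs (Set.mem_Ici.mp h)), mul_zero]
    have : ∫ t : ℝ, Complex.exp (-(b * ((t - r : ℝ) : ℂ))) * g (t - r)
        = ∫ s : ℝ, Complex.exp (-(b * (s : ℂ))) * g s :=
      integral_sub_right_eq_self (fun s : ℝ => Complex.exp (-(b * (s : ℂ))) * g s) r
    rw [this, hk, integral_indicator measurableSet_Ici,
      integral_Ici_eq_integral_Ioi, aux_exp_integral hd_pos]
  have hconv_fourier : ∫ t : ℝ, e t * ∫ r : ℝ, ξ r * g (t - r)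
      = (1 / (a + b)) * ∫ t : ℝ, e t * ξ t := by
    have h1 : ∀ t : ℝ, e t * ∫ r : ℝ, ξ r * g (t - r)
        = ∫ r : ℝ, e t * (ξ r * g (t - r)) := fun t => (integral_const_mul _ _).symm
    simp_rw [h1]
    rw [integral_integral_swap hprod2]
    have h2 : ∀ r : ℝ, ∫ t : ℝ, e t * (ξ r * g (t - r))
        = (1 / (a + b)) * (e r * ξ r) := by
      intro r
      have : ∀ t : ℝ, e t * (ξ r * g (t - r)) = ξ r * (e t * g (t - r)) := by
        intro t; ring
      simp_rw [this]
      rw [integral_const_mul, hkernel r]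
      ring
    simp_rw [h2]
    rw [integral_const_mul]
  -- put it together
  have hint1 : Integrable (fun t : ℝ => e t * ξ t) :=
    hξ.bdd_mul hemeas.aestronglyMeasurable (Filter.Eventually.of_forall hebound)
  have hint2 : Integrable (fun t : ℝ => e t * ∫ r : ℝ, ξ r * g (t - r)) :=
    hconv_int.bdd_mul hemeas.aestronglyMeasurable (Filter.Eventually.of_forall hebound)
  have hmain : (∫ t : ℝ, e t * ν t)
      = (∫ t : ℝ, e t * ξ t) - (κ : ℂ) * ∫ t : ℝ, e t * ∫ r : ℝ, ξ r * g (t - r) := by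
    have : ∀ t : ℝ, e t * ν t
        = e t * ξ t - (κ : ℂ) * (e t * ∫ r : ℝ, ξ r * g (t - r)) := by
      intro t; rw [hν_eq t]; ring
    simp_rw [this]
    rw [integral_sub hint1 ((hint2).const_mul (κ : ℂ)), integral_const_mul]
  have hfinal : (∫ t : ℝ, e t * ν t)
      = ((b + Complex.I * (ω_d : ℂ) - (κ : ℂ) / 2) / (b + Complex.I * (ω_d : ℂ) + (κ : ℂ) / 2))
        * ∫ t : ℝ, e t * ξ t := by
    rw [hmain, hconv_fourier]
    have hden : b + Complex.I * (ω_d : ℂ) + (κ : ℂ) / 2 = a + b := by rw [ha]; ring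
    rw [hden]
    field_simp
    ring
  have hee : ∀ t : ℝ, Complex.exp (-(Complex.I * (ω : ℂ) * (t : ℂ))) = e t := by
    intro t; rw [he, hb]
  exact hfinal
end

section
/- Let κ > 0 and ω_d ∈ ℝ. For ξ ∈ L¹(ℝ, ℂ) define (Tξ)(t) = ξ(t) − κ ∫_{−∞}^{t} e^{−(κ/2 + i·ω_d)(t − r)} ξ(r) dr and (T′ξ)(t) = ξ(t) − κ ∫_{t}^{∞} e^{(κ/2 − i·ω_d)(t − r)} ξ(r) dr. Then T and T′ map L¹(ℝ, ℂ) into itself and, for every ξ ∈ L¹(ℝ, ℂ), T′(Tξ) = ξ almost everywhere and T(T′ξ) = ξ almost everywhere. -/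
open MeasureTheory Complex

/-- The causal filter associated with the impulse response
`g_G(t) = δ(t) − κ e^{−(κ/2 + i ω_d)t}` (t ≥ 0). -/
noncomputable def Tfilter (κ ω_d : ℝ) (ξ : ℝ → ℂ) : ℝ → ℂ := fun t =>
  ξ t - (κ : ℂ) *
    ∫ r in Set.Iic t,
      Complex.exp (-((κ : ℂ) / 2 + Complex.I * (ω_d : ℂ)) * ((t : ℂ) - (r : ℂ))) * ξ r

/-- The anticausal filter whose Fourier multiplier is `1/G(iω)`. -/
noncomputable def Tfilter' (κ ω_d : ℝ) (ξ : ℝ → ℂ) : ℝ → ℂ := fun t =>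
  ξ t - (κ : ℂ) *
    ∫ r in Set.Ici t,
      Complex.exp (((κ : ℂ) / 2 - Complex.I * (ω_d : ℂ)) * ((t : ℂ) - (r : ℂ))) * ξ r

open Set ContinuousLinearMap
open scoped Convolution

noncomputable def gker (κ ω_d : ℝ) : ℝ → ℂ :=
  Set.indicator (Set.Ici 0) fun u : ℝ =>
    (κ : ℂ) * Complex.exp (-((κ : ℂ) / 2 + Complex.I * (ω_d : ℂ)) * (u : ℂ))

noncomputable def hker (κ ω_d : ℝ) : ℝ → ℂ :=
  Set.indicator (Set.Iio 0) fun u : ℝ =>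
    (κ : ℂ) * Complex.exp (((κ : ℂ) / 2 - Complex.I * (ω_d : ℂ)) * (u : ℂ))

lemma integrable_gker {κ : ℝ} (ω_d : ℝ) (hκ : 0 < κ) : Integrable (gker κ ω_d) := by
  rw [gker, integrable_indicator_iff measurableSet_Ici]
  have hc : Continuous fun u : ℝ =>
      (κ : ℂ) * Complex.exp (-((κ : ℂ) / 2 + Complex.I * (ω_d : ℂ)) * (u : ℂ)) := by
    fun_prop
  refine Integrable.mono' (g := fun u : ℝ => κ * Real.exp (-(κ / 2) * u))
    ?_ hc.aestronglyMeasurable.restrict ?_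
  · rw [← IntegrableOn, integrableOn_Ici_iff_integrableOn_Ioi]
    exact (exp_neg_integrableOn_Ioi 0 (by linarith)).const_mul κ
  · filter_upwards with u
    rw [norm_mul, Complex.norm_exp, Complex.norm_real, Real.norm_eq_abs,
      abs_of_pos hκ]
    have hre : (-((κ : ℂ) / 2 + Complex.I * (ω_d : ℂ)) * (u : ℂ)).re = -(κ / 2) * u := by
      simp [Complex.mul_re, Complex.add_re]
    rw [hre]

lemma ae_ne_zero : ∀ᵐ u : ℝ ∂volume, u ≠ 0 := by
  have h : {u : ℝ | ¬ u ≠ 0} = {0} := by ext; simp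
  rw [MeasureTheory.ae_iff, h]
  exact measure_singleton 0

lemma integrable_hker {κ : ℝ} (ω_d : ℝ) (hκ : 0 < κ) : Integrable (hker κ ω_d) := by
  have h := (integrable_gker (κ := κ) (-ω_d) hκ).comp_neg
  refine h.congr ?_
  filter_upwards [ae_ne_zero] with u hu
  rcases lt_or_gt_of_ne hu with h0 | h0
  · have h1 : (0:ℝ) ≤ -u := by linarith
    simp only [gker, hker, Set.indicator_of_mem (Set.mem_Ici.mpr h1),
      Set.indicator_of_mem (Set.mem_Iio.mpr h0)]
    congr 2
    push_cast
    ring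
  · have h1 : ¬ (0:ℝ) ≤ -u := by simp; linarith
    simp [gker, hker, Set.indicator, h1, not_lt.mpr (le_of_lt h0)]

lemma Tfilter_eq (κ ω_d : ℝ) (ξ : ℝ → ℂ) :
    Tfilter κ ω_d ξ = fun t => ξ t - (ξ ⋆[ContinuousLinearMap.mul ℂ ℂ] gker κ ω_d) t := by
  funext t
  unfold Tfilter
  congr 1
  rw [convolution_def]
  have key : (fun r => (ContinuousLinearMap.mul ℂ ℂ) (ξ r) (gker κ ω_d (t - r)))
      = Set.indicator (Set.Iic t) (fun r =>
        (κ : ℂ) * (Complex.exp (-((κ : ℂ) / 2 + Complex.I * (ω_d : ℂ)) * ((t : ℂ) - (r : ℂ))) * ξ r)) := by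
    funext r
    by_cases hr : r ≤ t
    · have h1 : (0:ℝ) ≤ t - r := by linarith
      simp only [ContinuousLinearMap.mul_apply', gker,
        Set.indicator_of_mem (Set.mem_Ici.mpr h1), Set.indicator_of_mem (Set.mem_Iic.mpr hr)]
      push_cast
      ring
    · have h1 : ¬ (0:ℝ) ≤ t - r := by simp; linarith
      simp [gker, Set.indicator, h1, hr]
  rw [key, MeasureTheory.integral_indicator measurableSet_Iic, MeasureTheory.integral_const_mul]

lemma Tfilter'_eq (κ ω_d : ℝ) (ξ : ℝ → ℂ) :
    Tfilter' κ ω_d ξ = fun t => ξ t - (ξ ⋆[ContinuousLinearMap.mul ℂ ℂ] hker κ ω_d) t := by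
  funext t
  unfold Tfilter'
  congr 1
  rw [convolution_def]
  have key : (fun r => (ContinuousLinearMap.mul ℂ ℂ) (ξ r) (hker κ ω_d (t - r)))
      = Set.indicator (Set.Ioi t) (fun r =>
        (κ : ℂ) * (Complex.exp (((κ : ℂ) / 2 - Complex.I * (ω_d : ℂ)) * ((t : ℂ) - (r : ℂ))) * ξ r)) := by
    funext r
    by_cases hr : t < r
    · have h1 : t - r < 0 := by linarith
      simp only [ContinuousLinearMap.mul_apply', hker,
        Set.indicator_of_mem (Set.mem_Iio.mpr h1), Set.indicator_of_mem (Set.mem_Ioi.mpr hr)]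
      push_cast
      ring
    · have h1 : ¬ t - r < 0 := by simp; linarith
      simp [hker, Set.indicator, h1, hr]
  rw [key, MeasureTheory.integral_indicator measurableSet_Ioi, MeasureTheory.integral_const_mul,
    ← MeasureTheory.integral_Ici_eq_integral_Ioi]

lemma real_exp_int {κ : ℝ} (hκ : 0 < κ) (a : ℝ) :
    ∫ s in Set.Ioi a, Real.exp (-(κ * s)) = Real.exp (-(κ * a)) / κ := by
  have hderiv : ∀ x ∈ Set.Ioi a, HasDerivAt (fun s => -Real.exp (-(κ * s)) / κ)
      (Real.exp (-(κ * x))) x := by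
    intro x _
    have h1 : HasDerivAt (fun s : ℝ => -(κ * s)) (-κ) x := by
      simpa [Pi.neg_def] using ((hasDerivAt_id x).const_mul κ).neg
    have h2 := (Real.hasDerivAt_exp (-(κ * x))).comp x h1
    have h3 := (h2.neg).div_const κ
    have hκ0 : κ ≠ 0 := hκ.ne'
    exact h3.congr_deriv (by rw [mul_neg, neg_neg, mul_div_assoc, div_self hκ0, mul_one])
  have hcont : ContinuousWithinAt (fun s => -Real.exp (-(κ * s)) / κ) (Set.Ici a) a := by
    apply Continuous.continuousWithinAt
    exact ((Real.continuous_exp.comp (by fun_prop)).neg).div_const κ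
  have hint : IntegrableOn (fun s => Real.exp (-(κ * s))) (Set.Ioi a) := by
    simpa [neg_mul] using exp_neg_integrableOn_Ioi a hκ
  have htend : Filter.Tendsto (fun s => -Real.exp (-(κ * s)) / κ) Filter.atTop (nhds 0) := by
    have h1 : Filter.Tendsto (fun s : ℝ => -(κ * s)) Filter.atTop Filter.atBot := by
      apply Filter.tendsto_neg_atBot_iff.mpr
      exact Filter.Tendsto.const_mul_atTop hκ Filter.tendsto_id
    have h2 : Filter.Tendsto (fun s : ℝ => Real.exp (-(κ * s))) Filter.atTop (nhds 0) :=
      Real.tendsto_exp_atBot.comp h1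
    have h3 := (h2.neg).div_const κ
    simpa using h3
  have := MeasureTheory.integral_Ioi_of_hasDerivAt_of_tendsto hcont hderiv hint htend
  rw [this]
  field_simp
  ring

lemma cexp_int {κ : ℝ} (hκ : 0 < κ) (a : ℝ) :
    ∫ s in Set.Ioi a, Complex.exp (-(κ : ℂ) * (s : ℂ)) =
      Complex.exp (-(κ : ℂ) * (a : ℂ)) / κ := by
  have h1 : ∀ s : ℝ, Complex.exp (-(κ : ℂ) * (s : ℂ)) = ((Real.exp (-(κ * s)) : ℝ) : ℂ) := by
    intro s
    rw [Complex.ofReal_exp]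
    push_cast
    ring_nf
  simp_rw [h1]
  rw [show (∫ s in Set.Ioi a, ((Real.exp (-(κ * s)) : ℝ) : ℂ))
      = ((∫ s in Set.Ioi a, Real.exp (-(κ * s)) : ℝ) : ℂ) from integral_ofReal,
    real_exp_int hκ a]
  push_cast [Complex.ofReal_exp]
  ring_nf

lemma conv_gh {κ : ℝ} (ω_d : ℝ) (hκ : 0 < κ) :
    gker κ ω_d ⋆[ContinuousLinearMap.mul ℂ ℂ] hker κ ω_d = gker κ ω_d + hker κ ω_d := by
  have hκc : (κ : ℂ) ≠ 0 := by exact_mod_cast hκ.ne'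
  funext u
  rw [convolution_def]
  have key : (fun s => (ContinuousLinearMap.mul ℂ ℂ) (gker κ ω_d s) (hker κ ω_d (u - s)))
      = Set.indicator (Set.Ici 0 ∩ Set.Ioi u) (fun s =>
        ((κ : ℂ)^2 * Complex.exp (((κ : ℂ) / 2 - Complex.I * (ω_d : ℂ)) * (u : ℂ))) *
          Complex.exp (-(κ : ℂ) * (s : ℂ))) := by
    funext s
    by_cases h0 : (0:ℝ) ≤ s
    · by_cases hu : u < s
      · have h1 : u - s < 0 := by linarith
        simp only [ContinuousLinearMap.mul_apply', gker, hker,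
          Set.indicator_of_mem (Set.mem_Ici.mpr h0), Set.indicator_of_mem (Set.mem_Iio.mpr h1),
          Set.indicator_of_mem (Set.mem_inter (Set.mem_Ici.mpr h0) (Set.mem_Ioi.mpr hu))]
        have e1 : (κ : ℂ) * Complex.exp (-((κ : ℂ) / 2 + Complex.I * (ω_d : ℂ)) * (s : ℂ)) *
            ((κ : ℂ) * Complex.exp (((κ : ℂ) / 2 - Complex.I * (ω_d : ℂ)) * ((u - s : ℝ) : ℂ)))
            = (κ : ℂ)^2 * Complex.exp (-((κ : ℂ) / 2 + Complex.I * (ω_d : ℂ)) * (s : ℂ) +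
                ((κ : ℂ) / 2 - Complex.I * (ω_d : ℂ)) * ((u - s : ℝ) : ℂ)) := by
          rw [Complex.exp_add]
          ring
        rw [e1, mul_assoc, ← Complex.exp_add]
        congr 1
        push_cast
        ring
      · have h1 : ¬ u - s < 0 := by simp; linarith
        have h2 : s ∉ Set.Ici (0:ℝ) ∩ Set.Ioi u := fun hs => hu hs.2
        rw [Set.indicator_of_notMem h2]
        simp [hker, Set.indicator, h1]
    · have h2 : s ∉ Set.Ici (0:ℝ) ∩ Set.Ioi u := fun hs => h0 hs.1
      rw [Set.indicator_of_notMem h2]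
      simp [gker, Set.indicator, h0]
  rw [key, MeasureTheory.integral_indicator (measurableSet_Ici.inter measurableSet_Ioi),
    MeasureTheory.integral_const_mul]
  by_cases hu : (0:ℝ) ≤ u
  · have hset : Set.Ici (0:ℝ) ∩ Set.Ioi u = Set.Ioi u := by
      apply Set.inter_eq_self_of_subset_right
      exact fun x hx => le_trans hu (le_of_lt hx)
    rw [hset, cexp_int hκ u]
    have hg : gker κ ω_d u = (κ : ℂ) * Complex.exp (-((κ : ℂ) / 2 + Complex.I * (ω_d : ℂ)) * (u : ℂ)) :=
      Set.indicator_of_mem (Set.mem_Ici.mpr hu) _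
    have hh : hker κ ω_d u = 0 := Set.indicator_of_notMem (by simp [not_lt.mpr hu]) _
    rw [Pi.add_apply, hg, hh, add_zero]
    have hexp : Complex.exp (((κ : ℂ) / 2 - Complex.I * (ω_d : ℂ)) * (u : ℂ)) *
        Complex.exp (-(κ : ℂ) * (u : ℂ)) =
        Complex.exp (-((κ : ℂ) / 2 + Complex.I * (ω_d : ℂ)) * (u : ℂ)) := by
      rw [← Complex.exp_add]
      congr 1
      ring
    calc (κ : ℂ)^2 * Complex.exp (((κ : ℂ) / 2 - Complex.I * (ω_d : ℂ)) * (u : ℂ)) *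
          (Complex.exp (-(κ : ℂ) * (u : ℂ)) / (κ : ℂ))
        = (κ : ℂ)^2 * (Complex.exp (((κ : ℂ) / 2 - Complex.I * (ω_d : ℂ)) * (u : ℂ)) *
            Complex.exp (-(κ : ℂ) * (u : ℂ))) / (κ : ℂ) := by ring
      _ = (κ : ℂ)^2 * Complex.exp (-((κ : ℂ) / 2 + Complex.I * (ω_d : ℂ)) * (u : ℂ)) / (κ : ℂ) := by
            rw [hexp]
      _ = (κ : ℂ) * Complex.exp (-((κ : ℂ) / 2 + Complex.I * (ω_d : ℂ)) * (u : ℂ)) := by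
            field_simp
  · have hset : Set.Ici (0:ℝ) ∩ Set.Ioi u = Set.Ici 0 := by
      apply Set.inter_eq_self_of_subset_left
      exact fun x hx => lt_of_lt_of_le (not_le.mp hu) hx
    rw [hset, MeasureTheory.integral_Ici_eq_integral_Ioi, cexp_int hκ 0]
    have hg : gker κ ω_d u = 0 := Set.indicator_of_notMem (by simpa using not_le.mp hu) _
    have hh : hker κ ω_d u = (κ : ℂ) * Complex.exp (((κ : ℂ) / 2 - Complex.I * (ω_d : ℂ)) * (u : ℂ)) :=
      Set.indicator_of_mem (Set.mem_Iio.mpr (not_le.mp hu)) _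
    rw [Pi.add_apply, hg, hh, zero_add]
    simp [Complex.exp_zero]
    field_simp

lemma mul_flip : (ContinuousLinearMap.mul ℂ ℂ).flip = ContinuousLinearMap.mul ℂ ℂ := by
  refine ContinuousLinearMap.ext fun x => ContinuousLinearMap.ext fun y => ?_
  simp [mul_comm]

lemma conv_hg {κ : ℝ} (ω_d : ℝ) (hκ : 0 < κ) :
    hker κ ω_d ⋆[ContinuousLinearMap.mul ℂ ℂ] gker κ ω_d = hker κ ω_d + gker κ ω_d := by
  have h1 : hker κ ω_d ⋆[(ContinuousLinearMap.mul ℂ ℂ).flip] gker κ ω_d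
      = gker κ ω_d ⋆[ContinuousLinearMap.mul ℂ ℂ] hker κ ω_d :=
    convolution_flip (ContinuousLinearMap.mul ℂ ℂ)
  rw [← mul_flip, h1, conv_gh ω_d hκ, add_comm]

lemma inv_ae {k1 k2 : ℝ → ℂ} (h1 : Integrable k1) (h2 : Integrable k2)
    (hconv : k1 ⋆[ContinuousLinearMap.mul ℂ ℂ] k2 = k1 + k2) {ξ : ℝ → ℂ} (hξ : Integrable ξ) :
    (fun t => (ξ t - (ξ ⋆[ContinuousLinearMap.mul ℂ ℂ] k1) t) -
        ((fun s => ξ s - (ξ ⋆[ContinuousLinearMap.mul ℂ ℂ] k1) s)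
          ⋆[ContinuousLinearMap.mul ℂ ℂ] k2) t) =ᵐ[volume] ξ := by
  set L := ContinuousLinearMap.mul ℂ ℂ with hL
  have hc1 : Integrable (ξ ⋆[L] k1) := hξ.integrable_convolution L h1
  have A1 : ∀ᵐ t : ℝ ∂volume, ConvolutionExistsAt ξ k2 t L := hξ.ae_convolution_exists L h2
  have A2 : ∀ᵐ t : ℝ ∂volume, ConvolutionExistsAt (ξ ⋆[L] k1) k2 t L :=
    hc1.ae_convolution_exists L h2
  have A3 : ∀ᵐ t : ℝ ∂volume, ConvolutionExistsAt ξ k1 t L := hξ.ae_convolution_exists L h1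
  have A4 : ∀ᵐ t : ℝ ∂volume, ((ξ ⋆[L] k1) ⋆[L] k2) t = (ξ ⋆[L] (k1 ⋆[L] k2)) t := by
    have hgk : ∀ᵐ x : ℝ ∂volume,
        ConvolutionExistsAt (fun x => ‖k1 x‖) (fun x => ‖k2 x‖) x (ContinuousLinearMap.mul ℝ ℝ) :=
      h1.norm.ae_convolution_exists _ h2.norm
    have hfgk : ∀ᵐ x : ℝ ∂volume, ConvolutionExistsAt (fun x => ‖ξ x‖)
        ((fun x => ‖k1 x‖) ⋆[ContinuousLinearMap.mul ℝ ℝ] fun x => ‖k2 x‖) x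
        (ContinuousLinearMap.mul ℝ ℝ) :=
      hξ.norm.ae_convolution_exists _ (h1.norm.integrable_convolution _ h2.norm)
    filter_upwards [hfgk] with t ht
    exact convolution_assoc L L L L (fun x y z => mul_assoc x y z)
      hξ.aestronglyMeasurable h1.aestronglyMeasurable h2.aestronglyMeasurable
      (hξ.ae_convolution_exists L h1) hgk ht
  filter_upwards [A1, A2, A3, A4] with t h1t h2t h3t h4t
  have h1t' : Integrable (fun s => ξ s * k2 (t - s)) := by
    simpa [hL, ConvolutionExistsAt, ContinuousLinearMap.mul_apply'] using h1t
  have h2t' : Integrable (fun s => (ξ ⋆[L] k1) s * k2 (t - s)) := by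
    simpa [hL, ConvolutionExistsAt, ContinuousLinearMap.mul_apply'] using h2t
  have split : ((fun s => ξ s - (ξ ⋆[L] k1) s) ⋆[L] k2) t
      = (ξ ⋆[L] k2) t - ((ξ ⋆[L] k1) ⋆[L] k2) t := by
    simp only [hL, convolution_def, ContinuousLinearMap.mul_apply', sub_mul]
    exact MeasureTheory.integral_sub h1t' h2t'
  have distrib : (ξ ⋆[L] (k1 ⋆[L] k2)) t = (ξ ⋆[L] k1) t + (ξ ⋆[L] k2) t := by
    rw [hconv]
    exact ConvolutionExistsAt.distrib_add h3t h1t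
  rw [split, h4t, distrib]
  ring

theorem stmt_5 (κ ω_d : ℝ) (hκ : 0 < κ) :
    (∀ ξ : ℝ → ℂ, Integrable ξ → Integrable (Tfilter κ ω_d ξ)) ∧
    (∀ ξ : ℝ → ℂ, Integrable ξ → Integrable (Tfilter' κ ω_d ξ)) ∧
    (∀ ξ : ℝ → ℂ, Integrable ξ →
      Tfilter' κ ω_d (Tfilter κ ω_d ξ) =ᵐ[volume] ξ) ∧
    (∀ ξ : ℝ → ℂ, Integrable ξ →
      Tfilter κ ω_d (Tfilter' κ ω_d ξ) =ᵐ[volume] ξ) := by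
  have hg := integrable_gker (κ := κ) ω_d hκ
  have hh := integrable_hker (κ := κ) ω_d hκ
  refine ⟨?_, ?_, ?_, ?_⟩
  · intro ξ hξ
    rw [Tfilter_eq]
    exact hξ.sub (hξ.integrable_convolution _ hg)
  · intro ξ hξ
    rw [Tfilter'_eq]
    exact hξ.sub (hξ.integrable_convolution _ hh)
  · intro ξ hξ
    rw [Tfilter'_eq, Tfilter_eq]
    exact inv_ae hg hh (conv_gh ω_d hκ) hξ
  · intro ξ hξ
    rw [Tfilter_eq, Tfilter'_eq]
    exact inv_ae hh hg (conv_hg ω_d hκ) hξ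
end

section
/- Let κ > 0, ω_d ∈ ℝ and ξ₁, ξ₂ ∈ L¹(ℝ, ℂ) ∩ L²(ℝ, ℂ). Define ν_j(t) = ξ_j(t) − κ ∫_{−∞}^{t} e^{−(κ/2 + i·ω_d)(t − r)} ξ_j(r) dr. Then ∫_{−∞}^{∞} ∫_{−∞}^{∞} |ν₁(p₁)ν₂(p₂) + ν₁(p₂)ν₂(p₁)|² dp₁ dp₂ = 2·(∫|ξ₁|²)(∫|ξ₂|²) + 2·|∫ conj(ξ₁(t)) ξ₂(t) dt|². In particular, if ∫|ξ₁|² = ∫|ξ₂|² = 1 then this double integral equals 2(1 + |⟨ξ₁, ξ₂⟩|²) = 2 N₂, where N₂ = 1 + |⟨ξ₁, ξ₂⟩|². -/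
open MeasureTheory Complex

open MeasureTheory Complex Set

noncomputable section B

variable {κ ω_d : ℝ} {f : ℝ → ℂ}

/-- the full-plane kernel -/
def KP (κ ω_d : ℝ) (f : ℝ → ℂ) (p : ℝ × ℝ) : ℂ :=
  Set.indicator {q : ℝ × ℝ | q.2 ≤ q.1}
    (fun q => Complex.exp (-((κ : ℂ) / 2 + Complex.I * (ω_d : ℂ)) * ((q.1 : ℂ) - (q.2 : ℂ))) * f q.2) p

lemma norm_ker' (κ ω_d : ℝ) (t r : ℝ) :
    ‖Complex.exp (-((κ : ℂ) / 2 + Complex.I * (ω_d : ℂ)) * ((t : ℂ) - (r : ℂ)))‖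
      = Real.exp (-(κ/2) * (t - r)) := by
  rw [Complex.norm_exp]
  congr 1
  have : -((κ : ℂ) / 2 + Complex.I * (ω_d : ℂ)) * ((t : ℂ) - (r : ℂ))
      = ((-(κ/2) * (t - r) : ℝ) : ℂ) + Complex.I * ((-ω_d * (t - r) : ℝ) : ℂ) := by
    push_cast; ring
  rw [this]
  simp

def Ek' (κ : ℝ) : ℝ → ℝ := Set.indicator (Set.Ici 0) (fun u => Real.exp (-(κ/2) * u))

lemma norm_KP (t r : ℝ) : ‖KP κ ω_d f (t, r)‖ = Ek' κ (t - r) * ‖f r‖ := by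
  rw [KP, Ek', Set.indicator_apply, Set.indicator_apply]
  by_cases h : r ≤ t
  · rw [if_pos (by simpa using h), if_pos (by simp [Set.mem_Ici]; linarith)]
    rw [norm_mul, norm_ker']
  · rw [if_neg (by simpa using h), if_neg (by simp [Set.mem_Ici]; linarith)]
    simp

lemma KP_aesm (hf : AEStronglyMeasurable f) :
    AEStronglyMeasurable (KP κ ω_d f) ((volume : Measure ℝ).prod volume) := by
  apply AEStronglyMeasurable.indicator _ (measurableSet_le measurable_snd measurable_fst)
  apply AEStronglyMeasurable.mul
  · exact (Complex.continuous_exp.comp (by fun_prop)).aestronglyMeasurable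
  · exact hf.comp_snd

def Sop' (κ ω_d : ℝ) (f : ℝ → ℂ) (t : ℝ) : ℂ :=
  ∫ r in Set.Iic t,
    Complex.exp (-((κ : ℂ) / 2 + Complex.I * (ω_d : ℂ)) * ((t : ℂ) - (r : ℂ))) * f r

lemma Sop_eq_KP (t : ℝ) : Sop' κ ω_d f t = ∫ r, KP κ ω_d f (t, r) := by
  rw [Sop', ← integral_indicator measurableSet_Iic]
  rfl

lemma Sop_aesm (hf : AEStronglyMeasurable f) : AEStronglyMeasurable (Sop' κ ω_d f) := by
  have := (KP_aesm (κ := κ) (ω_d := ω_d) hf).integral_prod_right'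
  exact this.congr (Filter.Eventually.of_forall (fun t => (Sop_eq_KP t).symm))


variable (hκ : 0 < κ) (hf : Integrable f)

lemma Ek'_nonneg (κ : ℝ) (u : ℝ) : 0 ≤ Ek' κ u :=
  Set.indicator_nonneg (fun x _ => by positivity) u

lemma Ek'_le_one (hκ : 0 < κ) (u : ℝ) : Ek' κ u ≤ 1 := by
  rw [Ek', Set.indicator_apply]
  split
  · rw [show (1:ℝ) = Real.exp 0 by simp]
    apply Real.exp_le_exp.mpr
    rename_i h
    rw [Set.mem_Ici] at h
    nlinarith
  · norm_num

lemma Ek'_integrable (hκ : 0 < κ) : Integrable (Ek' κ) := by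
  rw [Ek', integrable_indicator_iff measurableSet_Ici]
  exact (exp_neg_integrableOn_Ioi 0 (by positivity : (0:ℝ) < κ/2)).congr_set_ae
    (Filter.EventuallyEq.symm Ioi_ae_eq_Ici)

lemma Ek'_measurable (κ : ℝ) : Measurable (Ek' κ) :=
  Measurable.indicator (by fun_prop) measurableSet_Ici

/-- convolution-type integrand is integrable on the product space -/
lemma conv_integrable (hκ : 0 < κ) {g : ℝ → ℝ} (hg : Integrable g) :
    Integrable (fun p : ℝ × ℝ => Ek' κ (p.1 - p.2) * g p.2)
      ((volume : Measure ℝ).prod volume) := by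
  have haesm : AEStronglyMeasurable (fun p : ℝ × ℝ => Ek' κ (p.1 - p.2) * g p.2)
      ((volume : Measure ℝ).prod volume) := by
    apply AEStronglyMeasurable.mul
    · exact ((Ek'_measurable κ).comp (by fun_prop)).aestronglyMeasurable
    · exact hg.1.comp_snd
  rw [integrable_prod_iff' haesm]
  constructor
  · filter_upwards with s
    exact ((Ek'_integrable hκ).comp_sub_right s).mul_const (g s)
  · have : (fun s : ℝ => ∫ t : ℝ, ‖Ek' κ (t - s) * g s‖)
        = fun s : ℝ => (∫ u : ℝ, Ek' κ u) * |g s| := by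
      funext s
      rw [← integral_mul_const]
      rw [show (fun t : ℝ => ‖Ek' κ (t - s) * g s‖) = fun t : ℝ => Ek' κ (t - s) * |g s| by
        funext t
        rw [norm_mul, Real.norm_eq_abs, Real.norm_eq_abs, _root_.abs_of_nonneg (Ek'_nonneg κ _)]]
      exact integral_sub_right_eq_self (fun t => Ek' κ t * |g s|) s
    rw [this]
    exact hg.abs.const_mul _

lemma KP_integrable (hκ : 0 < κ) (hf : Integrable f) :
    Integrable (KP κ ω_d f) ((volume : Measure ℝ).prod volume) := by
  apply Integrable.mono' (conv_integrable hκ hf.norm) (KP_aesm hf.1)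
  filter_upwards with p
  rw [show p = (p.1, p.2) by rfl, norm_KP]

lemma Sop_norm_le_conv (t : ℝ) : ‖Sop' κ ω_d f t‖ ≤ ∫ r : ℝ, Ek' κ (t - r) * ‖f r‖ := by
  rw [Sop_eq_KP]
  refine (norm_integral_le_integral_norm _).trans_eq ?_
  apply integral_congr_ae
  filter_upwards with r
  exact norm_KP t r

lemma Sop_integrable (hκ : 0 < κ) (hf : Integrable f) : Integrable (Sop' κ ω_d f) := by
  apply Integrable.mono' ((conv_integrable hκ hf.norm).integral_prod_left) (Sop_aesm hf.1)
  filter_upwards with t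
  exact Sop_norm_le_conv t

lemma Sop_norm_le (hκ : 0 < κ) (hf : Integrable f) (t : ℝ) :
    ‖Sop' κ ω_d f t‖ ≤ ∫ r : ℝ, ‖f r‖ := by
  refine (Sop_norm_le_conv t).trans ?_
  apply integral_mono _ hf.norm
  · intro r
    calc Ek' κ (t - r) * ‖f r‖ ≤ 1 * ‖f r‖ := by
          apply mul_le_mul_of_nonneg_right (Ek'_le_one hκ _) (norm_nonneg _)
      _ = ‖f r‖ := one_mul _
  · apply Integrable.mono' hf.norm
    · exact (((Ek'_measurable κ).comp (by fun_prop : Measurable fun r : ℝ => t - r)).aestronglyMeasurable).mul hf.1.norm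
    · filter_upwards with r
      rw [Real.norm_eq_abs, _root_.abs_of_nonneg (mul_nonneg (Ek'_nonneg κ _) (norm_nonneg _))]
      calc Ek' κ (t - r) * ‖f r‖ ≤ 1 * ‖f r‖ :=
            mul_le_mul_of_nonneg_right (Ek'_le_one hκ _) (norm_nonneg _)
        _ = ‖f r‖ := one_mul _

lemma Sop_memℒp_two (hκ : 0 < κ) (hf : Integrable f) : MemLp (Sop' κ ω_d f) 2 := by
  rw [memLp_two_iff_integrable_sq_norm (Sop_aesm hf.1)]
  apply Integrable.mono' (((Sop_integrable (ω_d := ω_d) hκ hf).norm).const_mul (∫ r : ℝ, ‖f r‖))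
  · exact ((continuous_pow 2).comp_aestronglyMeasurable (Sop_aesm hf.1).norm)
  · filter_upwards with t
    rw [Real.norm_eq_abs, _root_.abs_of_nonneg (by positivity), pow_two]
    exact mul_le_mul_of_nonneg_right (Sop_norm_le hκ hf t) (norm_nonneg _)

end B
noncomputable section D
open MeasureTheory Complex Set

variable {κ ω_d : ℝ} {f h : ℝ → ℂ}

lemma conj_aesm {g : ℝ → ℂ} (hg : AEStronglyMeasurable g (volume : Measure ℝ)) :
    AEStronglyMeasurable (fun x => (starRingEnd ℂ) (g x)) (volume : Measure ℝ) :=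
  Complex.continuous_conj.comp_aestronglyMeasurable hg

lemma Sop_conj (κ ω_d : ℝ) (f : ℝ → ℂ) (t : ℝ) :
    (starRingEnd ℂ) (Sop' κ ω_d f t) = Sop' κ (-ω_d) (fun r => (starRingEnd ℂ) (f r)) t := by
  rw [Sop', Sop', ← integral_conj]
  apply integral_congr_ae
  filter_upwards with r
  rw [map_mul, ← Complex.exp_conj]
  congr 2
  simp only [map_mul, map_neg, map_add, map_sub, map_div₀, map_ofNat, Complex.conj_ofReal, Complex.conj_I]
  push_cast
  ring

lemma cexp_Ici (hκ : 0 < κ) (a : ℝ) :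
    ∫ t in Set.Ici a, Complex.exp (-(κ : ℂ) * (t : ℂ)) = Complex.exp (-(κ : ℂ) * (a : ℂ)) / κ := by
  rw [integral_Ici_eq_integral_Ioi]
  have h1 : ∀ t : ℝ, Complex.exp (-(κ : ℂ) * (t : ℂ)) = ((Real.exp (-(κ * t)) : ℝ) : ℂ) := by
    intro t
    rw [Complex.ofReal_exp]
    push_cast
    ring_nf
  calc (∫ t in Set.Ioi a, Complex.exp (-(κ : ℂ) * (t : ℂ)))
      = ∫ t in Set.Ioi a, ((Real.exp (-(κ * t)) : ℝ) : ℂ) := by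
        apply integral_congr_ae; filter_upwards with t; exact h1 t
    _ = ((∫ t in Set.Ioi a, Real.exp (-(κ * t)) : ℝ) : ℂ) := integral_ofReal
    _ = Complex.exp (-(κ : ℂ) * (a : ℂ)) / κ := by
        have h2 : (∫ t in Set.Ioi a, Real.exp (-(κ * t))) = Real.exp (-(κ * a)) / κ := by
          have h3 := integral_comp_mul_left_Ioi (fun x => Real.exp (-x)) a hκ
          simp only [smul_eq_mul] at h3
          rw [show (fun t : ℝ => Real.exp (-(κ * t))) = fun t : ℝ => Real.exp (-(κ * t)) from rfl]
          calc (∫ t in Set.Ioi a, Real.exp (-(κ * t))) = κ⁻¹ * ∫ x in Set.Ioi (κ * a), Real.exp (-x) := h3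
            _ = Real.exp (-(κ * a)) / κ := by
                rw [integral_exp_neg_Ioi]; field_simp
        rw [h2, Complex.ofReal_div, ← h1 a]

end D
noncomputable section E
open MeasureTheory Complex Set

variable {κ ω_d : ℝ} {f h : ℝ → ℂ}

lemma KP_right_aesm (κ ω_d : ℝ) (h : ℝ → ℂ) (s : ℝ) :
    AEStronglyMeasurable (fun t => KP κ ω_d h (t, s)) (volume : Measure ℝ) := by
  have e1 : (fun t => KP κ ω_d h (t, s)) = Set.indicator (Set.Ici s)
      (fun t : ℝ => Complex.exp (-((κ : ℂ) / 2 + Complex.I * (ω_d : ℂ)) * ((t : ℂ) - (s : ℂ))) * h s) := rfl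
  rw [e1]
  apply AEStronglyMeasurable.indicator _ measurableSet_Ici
  exact ((Complex.continuous_exp.comp (by fun_prop)).mul continuous_const).aestronglyMeasurable

lemma norm_conj' (z : ℂ) : ‖(starRingEnd ℂ) z‖ = ‖z‖ := norm_star z

/-- innermost t-integral -/
lemma inner_t (hκ : 0 < κ) (r s : ℝ) :
    (∫ t : ℝ, KP κ (-ω_d) (fun x => (starRingEnd ℂ) (f x)) (t, r) * KP κ ω_d h (t, s))
      = ((starRingEnd ℂ) (f r) * h s) *
        (Complex.exp (((κ : ℂ)/2 - Complex.I * (ω_d : ℂ)) * (r : ℂ)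
            + ((κ : ℂ)/2 + Complex.I * (ω_d : ℂ)) * (s : ℂ)
            - (κ : ℂ) * ((max r s : ℝ) : ℂ)) / κ) := by
  have hpt : ∀ t : ℝ, KP κ (-ω_d) (fun x => (starRingEnd ℂ) (f x)) (t, r) * KP κ ω_d h (t, s)
      = Set.indicator (Set.Ici (max r s))
          (fun t : ℝ => ((starRingEnd ℂ) (f r) * h s) *
            (Complex.exp (((κ : ℂ)/2 - Complex.I * (ω_d : ℂ)) * (r : ℂ)
              + ((κ : ℂ)/2 + Complex.I * (ω_d : ℂ)) * (s : ℂ)) * Complex.exp (-(κ : ℂ) * (t : ℂ)))) t := by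
    intro t
    rw [KP, KP, Set.indicator_apply, Set.indicator_apply, Set.indicator_apply]
    by_cases h1 : r ≤ t <;> by_cases h2 : s ≤ t
    · rw [if_pos (show ((t,r) : ℝ × ℝ) ∈ {q : ℝ × ℝ | q.2 ≤ q.1} from h1),
        if_pos (show ((t,s) : ℝ × ℝ) ∈ {q : ℝ × ℝ | q.2 ≤ q.1} from h2),
        if_pos (show t ∈ Set.Ici (max r s) from max_le h1 h2)]
      rw [mul_mul_mul_comm, ← Complex.exp_add, ← Complex.exp_add]
      rw [mul_comm]
      congr 2
      push_cast
      ring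
    · rw [if_neg (show ((t,s) : ℝ × ℝ) ∉ {q : ℝ × ℝ | q.2 ≤ q.1} from h2),
        if_neg (show t ∉ Set.Ici (max r s) from fun hc => h2 (le_trans (le_max_right r s) hc))]
      simp
    · rw [if_neg (show ((t,r) : ℝ × ℝ) ∉ {q : ℝ × ℝ | q.2 ≤ q.1} from h1),
        if_neg (show t ∉ Set.Ici (max r s) from fun hc => h1 (le_trans (le_max_left r s) hc))]
      simp
    · rw [if_neg (show ((t,r) : ℝ × ℝ) ∉ {q : ℝ × ℝ | q.2 ≤ q.1} from h1),
        if_neg (show t ∉ Set.Ici (max r s) from fun hc => h1 (le_trans (le_max_left r s) hc))]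
      simp
  calc (∫ t : ℝ, KP κ (-ω_d) (fun x => (starRingEnd ℂ) (f x)) (t, r) * KP κ ω_d h (t, s))
      = ∫ t : ℝ, Set.indicator (Set.Ici (max r s))
          (fun t : ℝ => ((starRingEnd ℂ) (f r) * h s) *
            (Complex.exp (((κ : ℂ)/2 - Complex.I * (ω_d : ℂ)) * (r : ℂ)
              + ((κ : ℂ)/2 + Complex.I * (ω_d : ℂ)) * (s : ℂ)) * Complex.exp (-(κ : ℂ) * (t : ℂ)))) t := by
        apply integral_congr_ae; filter_upwards with t; exact hpt t
    _ = ∫ t in Set.Ici (max r s), ((starRingEnd ℂ) (f r) * h s) *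
            (Complex.exp (((κ : ℂ)/2 - Complex.I * (ω_d : ℂ)) * (r : ℂ)
              + ((κ : ℂ)/2 + Complex.I * (ω_d : ℂ)) * (s : ℂ)) * Complex.exp (-(κ : ℂ) * (t : ℂ))) :=
        integral_indicator measurableSet_Ici
    _ = ((starRingEnd ℂ) (f r) * h s) * (Complex.exp (((κ : ℂ)/2 - Complex.I * (ω_d : ℂ)) * (r : ℂ)
              + ((κ : ℂ)/2 + Complex.I * (ω_d : ℂ)) * (s : ℂ)) *
          ∫ t in Set.Ici (max r s), Complex.exp (-(κ : ℂ) * (t : ℂ))) := by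
        rw [integral_const_mul, integral_const_mul]
    _ = _ := by
        rw [cexp_Ici hκ]
        rw [mul_div_assoc', ← Complex.exp_add]
        congr 2
        ring

lemma keyB (hκ : 0 < κ) (hf : Integrable f) (hh : Integrable h) (s : ℝ) :
    (∫ t : ℝ, (starRingEnd ℂ) (Sop' κ ω_d f t) * KP κ ω_d h (t, s))
      = ∫ r : ℝ, ((starRingEnd ℂ) (f r) * h s) *
          (Complex.exp (((κ : ℂ)/2 - Complex.I * (ω_d : ℂ)) * (r : ℂ)
            + ((κ : ℂ)/2 + Complex.I * (ω_d : ℂ)) * (s : ℂ)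
            - (κ : ℂ) * ((max r s : ℝ) : ℂ)) / κ) := by
  have hInt : Integrable (fun p : ℝ × ℝ =>
      KP κ (-ω_d) (fun x => (starRingEnd ℂ) (f x)) p * KP κ ω_d h (p.1, s))
      ((volume : Measure ℝ).prod volume) := by
    apply Integrable.mono' ((conv_integrable hκ hf.norm).mul_const ‖h s‖)
    · exact (KP_aesm (conj_aesm hf.1)).mul ((KP_right_aesm κ ω_d h s).comp_fst)
    · filter_upwards with p
      rw [norm_mul, show p = (p.1, p.2) from rfl, norm_KP, norm_KP, norm_conj']
      have h1 : Ek' κ (p.1 - s) * ‖h s‖ ≤ ‖h s‖ := by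
        calc Ek' κ (p.1 - s) * ‖h s‖ ≤ 1 * ‖h s‖ :=
              mul_le_mul_of_nonneg_right (Ek'_le_one hκ _) (norm_nonneg _)
          _ = ‖h s‖ := one_mul _
      exact mul_le_mul_of_nonneg_left h1 (mul_nonneg (Ek'_nonneg κ _) (norm_nonneg _))
  calc (∫ t : ℝ, (starRingEnd ℂ) (Sop' κ ω_d f t) * KP κ ω_d h (t, s))
      = ∫ t : ℝ, ∫ r : ℝ, KP κ (-ω_d) (fun x => (starRingEnd ℂ) (f x)) (t, r) * KP κ ω_d h (t, s) := by
        apply integral_congr_ae; filter_upwards with t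
        rw [Sop_conj, Sop_eq_KP]
        exact (integral_mul_const _ _).symm
    _ = ∫ r : ℝ, ∫ t : ℝ, KP κ (-ω_d) (fun x => (starRingEnd ℂ) (f x)) (t, r) * KP κ ω_d h (t, s) :=
        integral_integral_swap (by exact hInt)
    _ = _ := by
        apply integral_congr_ae; filter_upwards with r
        exact inner_t hκ r s

lemma keyAB (hκ : 0 < κ) (hf : Integrable f) (hh : Integrable h) :
    (∫ t : ℝ, (starRingEnd ℂ) (Sop' κ ω_d f t) * Sop' κ ω_d h t)
      = ∫ s : ℝ, ∫ r : ℝ, ((starRingEnd ℂ) (f r) * h s) *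
          (Complex.exp (((κ : ℂ)/2 - Complex.I * (ω_d : ℂ)) * (r : ℂ)
            + ((κ : ℂ)/2 + Complex.I * (ω_d : ℂ)) * (s : ℂ)
            - (κ : ℂ) * ((max r s : ℝ) : ℂ)) / κ) := by
  have hInt : Integrable (fun p : ℝ × ℝ =>
      (starRingEnd ℂ) (Sop' κ ω_d f p.1) * KP κ ω_d h p) ((volume : Measure ℝ).prod volume) := by
    apply Integrable.mono' ((conv_integrable hκ hh.norm).const_mul (∫ x : ℝ, ‖f x‖))
    · exact ((conj_aesm (Sop_aesm hf.1)).comp_fst).mul (KP_aesm hh.1)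
    · filter_upwards with p
      rw [norm_mul, norm_conj', show p = (p.1, p.2) from rfl, norm_KP]
      exact mul_le_mul_of_nonneg_right (Sop_norm_le hκ hf p.1)
        (mul_nonneg (Ek'_nonneg κ _) (norm_nonneg _))
  calc (∫ t : ℝ, (starRingEnd ℂ) (Sop' κ ω_d f t) * Sop' κ ω_d h t)
      = ∫ t : ℝ, ∫ s : ℝ, (starRingEnd ℂ) (Sop' κ ω_d f t) * KP κ ω_d h (t, s) := by
        apply integral_congr_ae; filter_upwards with t
        rw [Sop_eq_KP (f := h)]
        exact (integral_const_mul _ _).symm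
    _ = ∫ s : ℝ, ∫ t : ℝ, (starRingEnd ℂ) (Sop' κ ω_d f t) * KP κ ω_d h (t, s) :=
        integral_integral_swap (by exact hInt)
    _ = _ := by
        apply integral_congr_ae; filter_upwards with s
        exact keyB hκ hf hh s
end E
noncomputable section F
open MeasureTheory Complex Set

variable {κ ω_d : ℝ} {f h : ℝ → ℂ}

def Q2 (κ ω_d : ℝ) (f h : ℝ → ℂ) : ℝ × ℝ → ℂ :=
  Set.indicator {p : ℝ × ℝ | p.1 < p.2}
    (fun p => ((starRingEnd ℂ) (f p.2) * h p.1) *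
      Complex.exp (-((κ : ℂ)/2 + Complex.I * (ω_d : ℂ)) * ((p.2 : ℂ) - (p.1 : ℂ))))

lemma Q2_integrable (hκ : 0 < κ) (hf : Integrable f) (hh : Integrable h) :
    Integrable (Q2 κ ω_d f h) ((volume : Measure ℝ).prod volume) := by
  apply Integrable.mono' (hh.norm.mul_prod hf.norm)
  · apply AEStronglyMeasurable.indicator _ (measurableSet_lt measurable_fst measurable_snd)
    exact (((conj_aesm hf.1).comp_snd).mul hh.1.comp_fst).mul
      ((Complex.continuous_exp.comp (by fun_prop)).aestronglyMeasurable)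
  · filter_upwards with p
    rw [Q2, Set.indicator_apply]
    split
    · rename_i hp
      rw [norm_mul, norm_mul, norm_conj', norm_ker']
      calc ‖f p.2‖ * ‖h p.1‖ * Real.exp (-(κ/2) * (p.2 - p.1))
          ≤ ‖f p.2‖ * ‖h p.1‖ * 1 := by
            apply mul_le_mul_of_nonneg_left _ (by positivity)
            rw [show (1:ℝ) = Real.exp 0 by simp]
            apply Real.exp_le_exp.mpr
            have : p.1 < p.2 := hp
            nlinarith
        _ = ‖h p.1‖ * ‖f p.2‖ := by ring
    · simp only [norm_zero]
      positivity

lemma norm_c_le_one (hκ : 0 < κ) (r s : ℝ) :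
    ‖Complex.exp (((κ : ℂ)/2 - Complex.I * (ω_d : ℂ)) * (r : ℂ)
      + ((κ : ℂ)/2 + Complex.I * (ω_d : ℂ)) * (s : ℂ)
      - (κ : ℂ) * ((max r s : ℝ) : ℂ))‖ ≤ 1 := by
  rw [Complex.norm_exp]
  rw [show (1:ℝ) = Real.exp 0 by simp]
  apply Real.exp_le_exp.mpr
  have hre : (((κ : ℂ)/2 - Complex.I * (ω_d : ℂ)) * (r : ℂ)
      + ((κ : ℂ)/2 + Complex.I * (ω_d : ℂ)) * (s : ℂ)
      - (κ : ℂ) * ((max r s : ℝ) : ℂ)).re = κ/2*r + κ/2*s - κ * max r s := by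
    simp [Complex.add_re, Complex.sub_re, Complex.mul_re]
  rw [hre]
  have h1 := le_max_left r s
  have h2 := le_max_right r s
  nlinarith

lemma W_integrable (hκ : 0 < κ) (hf : Integrable f) (s : ℝ) :
    Integrable (fun r : ℝ => ((starRingEnd ℂ) (f r) * h s) *
      Complex.exp (((κ : ℂ)/2 - Complex.I * (ω_d : ℂ)) * (r : ℂ)
        + ((κ : ℂ)/2 + Complex.I * (ω_d : ℂ)) * (s : ℂ)
        - (κ : ℂ) * ((max r s : ℝ) : ℂ))) := by
  apply Integrable.mono' (hf.norm.mul_const ‖h s‖)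
  · apply AEStronglyMeasurable.mul
    · exact (conj_aesm hf.1).mul_const _
    · refine Continuous.aestronglyMeasurable ?_
      apply Complex.continuous_exp.comp
      have hmax : Continuous fun r : ℝ => max r s := continuous_id.max continuous_const
      fun_prop
  · filter_upwards with r
    rw [norm_mul, norm_mul, norm_conj']
    calc ‖f r‖ * ‖h s‖ * ‖Complex.exp _‖ ≤ ‖f r‖ * ‖h s‖ * 1 :=
          mul_le_mul_of_nonneg_left (norm_c_le_one hκ r s) (by positivity)
      _ = ‖f r‖ * ‖h s‖ := mul_one _

/-- split of the r-integral at s -/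
lemma keyD (hκ : 0 < κ) (hf : Integrable f) (hh : Integrable h) (s : ℝ) :
    (∫ r : ℝ, ((starRingEnd ℂ) (f r) * h s) *
        (Complex.exp (((κ : ℂ)/2 - Complex.I * (ω_d : ℂ)) * (r : ℂ)
          + ((κ : ℂ)/2 + Complex.I * (ω_d : ℂ)) * (s : ℂ)
          - (κ : ℂ) * ((max r s : ℝ) : ℂ)) / κ))
      = ((starRingEnd ℂ) (Sop' κ ω_d f s) * h s) / κ + (∫ r : ℝ, Q2 κ ω_d f h (s, r)) / κ := by
  have hW := W_integrable (ω_d := ω_d) (h := h) hκ hf s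
  calc (∫ r : ℝ, ((starRingEnd ℂ) (f r) * h s) *
        (Complex.exp (((κ : ℂ)/2 - Complex.I * (ω_d : ℂ)) * (r : ℂ)
          + ((κ : ℂ)/2 + Complex.I * (ω_d : ℂ)) * (s : ℂ)
          - (κ : ℂ) * ((max r s : ℝ) : ℂ)) / κ))
      = (∫ r : ℝ, ((starRingEnd ℂ) (f r) * h s) *
        Complex.exp (((κ : ℂ)/2 - Complex.I * (ω_d : ℂ)) * (r : ℂ)
          + ((κ : ℂ)/2 + Complex.I * (ω_d : ℂ)) * (s : ℂ)
          - (κ : ℂ) * ((max r s : ℝ) : ℂ))) / κ := by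
        rw [← integral_div]
        apply integral_congr_ae; filter_upwards with r
        rw [mul_div_assoc]
    _ = ((∫ r in Set.Iic s, ((starRingEnd ℂ) (f r) * h s) *
            Complex.exp (((κ : ℂ)/2 - Complex.I * (ω_d : ℂ)) * (r : ℂ)
              + ((κ : ℂ)/2 + Complex.I * (ω_d : ℂ)) * (s : ℂ)
              - (κ : ℂ) * ((max r s : ℝ) : ℂ)))
          + ∫ r in Set.Ioi s, ((starRingEnd ℂ) (f r) * h s) *
            Complex.exp (((κ : ℂ)/2 - Complex.I * (ω_d : ℂ)) * (r : ℂ)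
              + ((κ : ℂ)/2 + Complex.I * (ω_d : ℂ)) * (s : ℂ)
              - (κ : ℂ) * ((max r s : ℝ) : ℂ))) / κ := by
        rw [← intervalIntegral.integral_Iic_add_Ioi hW.integrableOn hW.integrableOn]
    _ = _ := by
        have hIic : (∫ r in Set.Iic s, ((starRingEnd ℂ) (f r) * h s) *
            Complex.exp (((κ : ℂ)/2 - Complex.I * (ω_d : ℂ)) * (r : ℂ)
              + ((κ : ℂ)/2 + Complex.I * (ω_d : ℂ)) * (s : ℂ)
              - (κ : ℂ) * ((max r s : ℝ) : ℂ)))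
            = (starRingEnd ℂ) (Sop' κ ω_d f s) * h s := by
          rw [Sop', ← integral_conj, ← integral_mul_const]
          apply setIntegral_congr_fun measurableSet_Iic
          intro r hr
          dsimp only
          rw [show max r s = s from max_eq_right (Set.mem_Iic.mp hr), map_mul, ← Complex.exp_conj]
          simp only [map_mul, map_neg, map_add, map_sub, map_div₀, map_ofNat,
            Complex.conj_ofReal, Complex.conj_I]
          rw [show ((starRingEnd ℂ) (f r) * h s) *
              Complex.exp (((κ:ℂ)/2 - Complex.I * (ω_d : ℂ)) * (r:ℂ)
                + ((κ:ℂ)/2 + Complex.I * (ω_d:ℂ)) * (s:ℂ) - (κ:ℂ) * (s:ℂ))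
              = (Complex.exp (((κ:ℂ)/2 - Complex.I * (ω_d : ℂ)) * (r:ℂ)
                + ((κ:ℂ)/2 + Complex.I * (ω_d:ℂ)) * (s:ℂ) - (κ:ℂ) * (s:ℂ)) *
                (starRingEnd ℂ) (f r)) * h s from by ring]
          congr 3
          ring
        have hIoi : (∫ r in Set.Ioi s, ((starRingEnd ℂ) (f r) * h s) *
            Complex.exp (((κ : ℂ)/2 - Complex.I * (ω_d : ℂ)) * (r : ℂ)
              + ((κ : ℂ)/2 + Complex.I * (ω_d : ℂ)) * (s : ℂ)
              - (κ : ℂ) * ((max r s : ℝ) : ℂ)))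
            = ∫ r : ℝ, Q2 κ ω_d f h (s, r) := by
          rw [show (fun r : ℝ => Q2 κ ω_d f h (s, r)) = Set.indicator (Set.Ioi s)
              (fun r : ℝ => ((starRingEnd ℂ) (f r) * h s) *
                Complex.exp (-((κ : ℂ)/2 + Complex.I * (ω_d : ℂ)) * ((r : ℂ) - (s : ℂ)))) from rfl,
            integral_indicator measurableSet_Ioi]
          apply setIntegral_congr_fun measurableSet_Ioi
          intro r hr
          dsimp only
          rw [show max r s = r from max_eq_left (le_of_lt (Set.mem_Ioi.mp hr))]
          congr 1
          congr 1
          ring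
        rw [hIic, hIoi, add_div]

/-- second piece is ⟨f, S h⟩ -/
lemma keyE (hκ : 0 < κ) (hf : Integrable f) (hh : Integrable h) :
    (∫ s : ℝ, ∫ r : ℝ, Q2 κ ω_d f h (s, r))
      = ∫ t : ℝ, (starRingEnd ℂ) (f t) * Sop' κ ω_d h t := by
  rw [integral_integral_swap (by exact Q2_integrable hκ hf hh)]
  apply integral_congr_ae; filter_upwards with r
  calc (∫ s : ℝ, Q2 κ ω_d f h (s, r))
      = ∫ s in Set.Iio r, ((starRingEnd ℂ) (f r) * h s) *
          Complex.exp (-((κ : ℂ)/2 + Complex.I * (ω_d : ℂ)) * ((r : ℂ) - (s : ℂ))) := by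
        rw [show (fun s : ℝ => Q2 κ ω_d f h (s, r)) = Set.indicator (Set.Iio r)
            (fun s : ℝ => ((starRingEnd ℂ) (f r) * h s) *
              Complex.exp (-((κ : ℂ)/2 + Complex.I * (ω_d : ℂ)) * ((r : ℂ) - (s : ℂ)))) from rfl,
          integral_indicator measurableSet_Iio]
    _ = ∫ s in Set.Iic r, ((starRingEnd ℂ) (f r) * h s) *
          Complex.exp (-((κ : ℂ)/2 + Complex.I * (ω_d : ℂ)) * ((r : ℂ) - (s : ℂ))) :=
        (integral_Iic_eq_integral_Iio).symm
    _ = (starRingEnd ℂ) (f r) * Sop' κ ω_d h r := by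
        rw [Sop', ← integral_const_mul]
        apply setIntegral_congr_fun measurableSet_Iic
        intro s _
        ring

/-- the key identity -/
lemma key (hκ : 0 < κ) (hf : Integrable f) (hh : Integrable h) :
    (κ : ℂ) * (∫ t : ℝ, (starRingEnd ℂ) (Sop' κ ω_d f t) * Sop' κ ω_d h t)
      = (∫ t : ℝ, (starRingEnd ℂ) (Sop' κ ω_d f t) * h t)
        + ∫ t : ℝ, (starRingEnd ℂ) (f t) * Sop' κ ω_d h t := by
  have hκ0 : (κ : ℂ) ≠ 0 := by exact_mod_cast ne_of_gt hκ
  have hA : Integrable (fun s : ℝ => (starRingEnd ℂ) (Sop' κ ω_d f s) * h s) := by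
    apply Integrable.bdd_mul hh (conj_aesm (Sop_aesm hf.1))
    exact Filter.Eventually.of_forall (fun s => by rw [norm_conj']; exact Sop_norm_le hκ hf s)
  have hB : Integrable (fun s : ℝ => ∫ r : ℝ, Q2 κ ω_d f h (s, r)) :=
    (Q2_integrable hκ hf hh).integral_prod_left
  rw [keyAB hκ hf hh]
  rw [show (∫ s : ℝ, ∫ r : ℝ, ((starRingEnd ℂ) (f r) * h s) *
      (Complex.exp (((κ : ℂ)/2 - Complex.I * (ω_d : ℂ)) * (r : ℂ)
        + ((κ : ℂ)/2 + Complex.I * (ω_d : ℂ)) * (s : ℂ)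
        - (κ : ℂ) * ((max r s : ℝ) : ℂ)) / κ))
      = ∫ s : ℝ, (((starRingEnd ℂ) (Sop' κ ω_d f s) * h s) / κ
          + (∫ r : ℝ, Q2 κ ω_d f h (s, r)) / κ) from by
    apply integral_congr_ae; filter_upwards with s; exact keyD hκ hf hh s]
  rw [integral_add (hA.div_const _) (hB.div_const _), integral_div, integral_div,
    keyE hκ hf hh]
  field_simp

end F
noncomputable section G
open MeasureTheory Complex Set
open scoped ENNReal

variable {κ ω_d : ℝ} {f h : ℝ → ℂ}

lemma memℒp_conj {g : ℝ → ℂ} (hg : MemLp g 2 (volume : Measure ℝ)) :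
    MemLp (fun t => (starRingEnd ℂ) (g t)) 2 (volume : Measure ℝ) := by
  apply MemLp.of_le hg (conj_aesm hg.1)
  filter_upwards with t
  rw [norm_conj']

lemma integrable_conj' {g : ℝ → ℂ} (hg : Integrable g (volume : Measure ℝ)) :
    Integrable (fun t => (starRingEnd ℂ) (g t)) (volume : Measure ℝ) := by
  apply Integrable.mono' hg.norm (conj_aesm hg.1)
  filter_upwards with t
  rw [norm_conj']

lemma integrable_mul_L2 {a b : ℝ → ℂ} (ha : MemLp a 2 (volume : Measure ℝ))
    (hb : MemLp b 2 (volume : Measure ℝ)) :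
    Integrable (fun t => a t * b t) (volume : Measure ℝ) := by
  rw [← memLp_one_iff_integrable]
  have hpqr : (1 : ℝ≥0∞) / 1 = 1 / 2 + 1 / 2 := by
    simpa using ENNReal.inv_two_add_inv_two.symm
  exact hb.smul ha (hpqr := ⟨by simpa using ENNReal.inv_two_add_inv_two⟩)

/-- the isometry property -/
lemma isometry_lem (hκ : 0 < κ) (hf : Integrable f) (hh : Integrable h)
    (hf2 : MemLp f 2) (hh2 : MemLp h 2) :
    (∫ t : ℝ, (starRingEnd ℂ) (f t - (κ : ℂ) * Sop' κ ω_d f t) * (h t - (κ : ℂ) * Sop' κ ω_d h t))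
      = ∫ t : ℝ, (starRingEnd ℂ) (f t) * h t := by
  have hMf : ∀ s : ℝ, ‖Sop' κ ω_d f s‖ ≤ ∫ x : ℝ, ‖f x‖ := Sop_norm_le hκ hf
  have hMh : ∀ s : ℝ, ‖Sop' κ ω_d h s‖ ≤ ∫ x : ℝ, ‖h x‖ := Sop_norm_le hκ hh
  have I1 : Integrable (fun t => (starRingEnd ℂ) (f t) * h t) :=
    integrable_mul_L2 (memℒp_conj hf2) hh2
  have I2 : Integrable (fun t => (starRingEnd ℂ) (Sop' κ ω_d f t) * h t) := by
    apply Integrable.bdd_mul hh (conj_aesm (Sop_aesm hf.1))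
    exact Filter.Eventually.of_forall (fun s => by rw [norm_conj']; exact hMf s)
  have I3 : Integrable (fun t => (starRingEnd ℂ) (f t) * Sop' κ ω_d h t) := by
    have := Integrable.bdd_mul (integrable_conj' hf) (Sop_aesm hh.1)
      (c := ∫ x : ℝ, ‖h x‖) (Filter.Eventually.of_forall (fun s => hMh s))
    exact this.congr (Filter.Eventually.of_forall (fun t => mul_comm _ _))
  have I4 : Integrable (fun t => (starRingEnd ℂ) (Sop' κ ω_d f t) * Sop' κ ω_d h t) := by
    apply Integrable.bdd_mul (Sop_integrable hκ hh) (conj_aesm (Sop_aesm hf.1))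
    exact Filter.Eventually.of_forall (fun s => by rw [norm_conj']; exact hMf s)
  calc (∫ t : ℝ, (starRingEnd ℂ) (f t - (κ : ℂ) * Sop' κ ω_d f t) * (h t - (κ : ℂ) * Sop' κ ω_d h t))
      = ∫ t : ℝ, ((starRingEnd ℂ) (f t) * h t
          - (κ : ℂ) * ((starRingEnd ℂ) (Sop' κ ω_d f t) * h t)
          - (κ : ℂ) * ((starRingEnd ℂ) (f t) * Sop' κ ω_d h t)
          + (κ : ℂ) * ((κ : ℂ) * ((starRingEnd ℂ) (Sop' κ ω_d f t) * Sop' κ ω_d h t))) := by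
        apply integral_congr_ae; filter_upwards with t
        simp only [map_sub, map_mul, Complex.conj_ofReal]
        ring
    _ = (∫ t : ℝ, (starRingEnd ℂ) (f t) * h t)
          - (κ : ℂ) * (∫ t : ℝ, (starRingEnd ℂ) (Sop' κ ω_d f t) * h t)
          - (κ : ℂ) * (∫ t : ℝ, (starRingEnd ℂ) (f t) * Sop' κ ω_d h t)
          + (κ : ℂ) * ((κ : ℂ) * (∫ t : ℝ, (starRingEnd ℂ) (Sop' κ ω_d f t) * Sop' κ ω_d h t)) := by
        have I2' : Integrable (fun t => (κ : ℂ) * ((starRingEnd ℂ) (Sop' κ ω_d f t) * h t)) :=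
          I2.const_mul _
        have I3' : Integrable (fun t => (κ : ℂ) * ((starRingEnd ℂ) (f t) * Sop' κ ω_d h t)) :=
          I3.const_mul _
        have I4' : Integrable (fun t => (κ : ℂ) * ((κ : ℂ) *
            ((starRingEnd ℂ) (Sop' κ ω_d f t) * Sop' κ ω_d h t))) := (I4.const_mul _).const_mul _
        have IA : Integrable (fun t => (starRingEnd ℂ) (f t) * h t
            - (κ : ℂ) * ((starRingEnd ℂ) (Sop' κ ω_d f t) * h t)) := I1.sub I2'
        have IB : Integrable (fun t => (starRingEnd ℂ) (f t) * h t
            - (κ : ℂ) * ((starRingEnd ℂ) (Sop' κ ω_d f t) * h t)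
            - (κ : ℂ) * ((starRingEnd ℂ) (f t) * Sop' κ ω_d h t)) := IA.sub I3'
        rw [integral_add IB I4', integral_sub IA I3', integral_sub I1 I2',
          integral_const_mul, integral_const_mul, integral_const_mul, integral_const_mul]
    _ = ∫ t : ℝ, (starRingEnd ℂ) (f t) * h t := by
        rw [key hκ hf hh]
        ring

end G
noncomputable section H
open MeasureTheory Complex Set

lemma norm_add_sq'' (x y : ℂ) : ‖x + y‖^2 = ‖x‖^2 + ‖y‖^2 + 2 * (x * (starRingEnd ℂ) y).re := by
  rw [Complex.sq_norm,
    Complex.sq_norm, Complex.sq_norm]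
  exact Complex.normSq_add x y

lemma integral_cre {g : ℝ → ℂ} (hg : Integrable g (volume : Measure ℝ)) :
    (∫ t : ℝ, (g t).re) = (∫ t : ℝ, g t).re := by
  simpa using integral_re hg

lemma sq_norm_integral_eq {g : ℝ → ℂ} :
    ((∫ t : ℝ, ‖g t‖^2 : ℝ) : ℂ) = ∫ t : ℝ, (starRingEnd ℂ) (g t) * g t := by
  have h1 : (∫ t : ℝ, (((‖g t‖^2 : ℝ)) : ℂ)) = ((∫ t : ℝ, ‖g t‖^2 : ℝ) : ℂ) := integral_ofReal
  rw [← h1]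
  apply integral_congr_ae; filter_upwards with t
  rw [mul_comm, Complex.mul_conj, Complex.sq_norm]

lemma final_comp {a b : ℝ → ℂ} (ha2 : MemLp a 2 (volume : Measure ℝ))
    (hb2 : MemLp b 2 (volume : Measure ℝ)) :
    (∫ p₂ : ℝ, ∫ p₁ : ℝ, ‖a p₁ * b p₂ + a p₂ * b p₁‖^2)
      = 2 * (∫ t : ℝ, ‖a t‖^2) * (∫ t : ℝ, ‖b t‖^2)
        + 2 * ‖∫ t : ℝ, (starRingEnd ℂ) (a t) * b t‖^2 := by
  have haa : Integrable (fun t : ℝ => ‖a t‖^2) := (memLp_two_iff_integrable_sq_norm ha2.1).mp ha2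
  have hbb : Integrable (fun t : ℝ => ‖b t‖^2) := (memLp_two_iff_integrable_sq_norm hb2.1).mp hb2
  have hD : Integrable (fun t : ℝ => a t * (starRingEnd ℂ) (b t)) :=
    integrable_mul_L2 ha2 (memℒp_conj hb2)
  have hE : Integrable (fun t : ℝ => b t * (starRingEnd ℂ) (a t)) :=
    integrable_mul_L2 hb2 (memℒp_conj ha2)
  set Aa : ℝ := ∫ t : ℝ, ‖a t‖^2 with hAa
  set Ab : ℝ := ∫ t : ℝ, ‖b t‖^2 with hAb
  set D : ℂ := ∫ t : ℝ, a t * (starRingEnd ℂ) (b t) with hD'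
  set E : ℂ := ∫ t : ℝ, b t * (starRingEnd ℂ) (a t) with hE'
  set C : ℂ := ∫ t : ℝ, (starRingEnd ℂ) (a t) * b t with hC'
  have Jeq : ∀ p₂ : ℝ, (∫ p₁ : ℝ, ‖a p₁ * b p₂ + a p₂ * b p₁‖^2)
      = Aa * ‖b p₂‖^2 + ‖a p₂‖^2 * Ab + 2 * (D * (b p₂ * (starRingEnd ℂ) (a p₂))).re := by
    intro p₂
    have J1 : Integrable (fun p₁ : ℝ => ‖a p₁‖^2 * ‖b p₂‖^2) := haa.mul_const _
    have J2 : Integrable (fun p₁ : ℝ => ‖a p₂‖^2 * ‖b p₁‖^2) := hbb.const_mul _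
    have JD : Integrable (fun p₁ : ℝ =>
        (a p₁ * (starRingEnd ℂ) (b p₁)) * (b p₂ * (starRingEnd ℂ) (a p₂))) := hD.mul_const _
    have JDre : Integrable (fun p₁ : ℝ =>
        ((a p₁ * (starRingEnd ℂ) (b p₁)) * (b p₂ * (starRingEnd ℂ) (a p₂))).re) := JD.re
    have J3 : Integrable (fun p₁ : ℝ =>
        2 * ((a p₁ * (starRingEnd ℂ) (b p₁)) * (b p₂ * (starRingEnd ℂ) (a p₂))).re) :=
      JDre.const_mul 2
    have J12 : Integrable (fun p₁ : ℝ => ‖a p₁‖^2 * ‖b p₂‖^2 + ‖a p₂‖^2 * ‖b p₁‖^2) :=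
      J1.add J2
    calc (∫ p₁ : ℝ, ‖a p₁ * b p₂ + a p₂ * b p₁‖^2)
        = ∫ p₁ : ℝ, (‖a p₁‖^2 * ‖b p₂‖^2 + ‖a p₂‖^2 * ‖b p₁‖^2
            + 2 * ((a p₁ * (starRingEnd ℂ) (b p₁)) * (b p₂ * (starRingEnd ℂ) (a p₂))).re) := by
          apply integral_congr_ae; filter_upwards with p₁
          have h3 : (a p₁ * b p₂) * (starRingEnd ℂ) (a p₂ * b p₁)
              = (a p₁ * (starRingEnd ℂ) (b p₁)) * (b p₂ * (starRingEnd ℂ) (a p₂)) := by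
            rw [map_mul]; ring
          rw [norm_add_sq'', norm_mul, norm_mul, mul_pow, mul_pow, h3]
      _ = Aa * ‖b p₂‖^2 + ‖a p₂‖^2 * Ab + 2 * (D * (b p₂ * (starRingEnd ℂ) (a p₂))).re := by
          rw [integral_add J12 J3, integral_add J1 J2, integral_mul_const,
            integral_const_mul, integral_const_mul, integral_cre JD, integral_mul_const]
  have hDC : D = (starRingEnd ℂ) C := by
    rw [hC', ← integral_conj, hD']
    apply integral_congr_ae; filter_upwards with t
    rw [map_mul, Complex.conj_conj, mul_comm]
  have hEC : E = C := by
    rw [hE', hC']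
    apply integral_congr_ae; filter_upwards with t
    rw [mul_comm]
  have K1 : Integrable (fun p₂ : ℝ => Aa * ‖b p₂‖^2) := hbb.const_mul _
  have K2 : Integrable (fun p₂ : ℝ => ‖a p₂‖^2 * Ab) := haa.mul_const _
  have KE : Integrable (fun p₂ : ℝ => D * (b p₂ * (starRingEnd ℂ) (a p₂))) := hE.const_mul _
  have KEre : Integrable (fun p₂ : ℝ => (D * (b p₂ * (starRingEnd ℂ) (a p₂))).re) := KE.re
  have K3 : Integrable (fun p₂ : ℝ => 2 * (D * (b p₂ * (starRingEnd ℂ) (a p₂))).re) :=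
    KEre.const_mul 2
  have K12 : Integrable (fun p₂ : ℝ => Aa * ‖b p₂‖^2 + ‖a p₂‖^2 * Ab) := K1.add K2
  calc (∫ p₂ : ℝ, ∫ p₁ : ℝ, ‖a p₁ * b p₂ + a p₂ * b p₁‖^2)
      = ∫ p₂ : ℝ, (Aa * ‖b p₂‖^2 + ‖a p₂‖^2 * Ab
          + 2 * (D * (b p₂ * (starRingEnd ℂ) (a p₂))).re) := by
        apply integral_congr_ae; filter_upwards with p₂; exact Jeq p₂
    _ = Aa * Ab + Aa * Ab + 2 * (D * E).re := by
        rw [integral_add K12 K3, integral_add K1 K2, integral_const_mul,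
          integral_mul_const, integral_const_mul (2:ℝ), integral_cre KE, integral_const_mul,
          ← hAa, ← hAb, ← hE']
    _ = 2 * Aa * Ab + 2 * ‖C‖^2 := by
        rw [hDC, hEC, mul_comm ((starRingEnd ℂ) C) C, Complex.mul_conj]
        rw [Complex.ofReal_re, Complex.normSq_eq_norm_sq]
        ring

end H
noncomputable section M
open MeasureTheory Complex Set

lemma main_calc {κ ω_d : ℝ} (hκ : 0 < κ) {ξ₁ ξ₂ ν₁ ν₂ : ℝ → ℂ}
    (h₁ : Integrable ξ₁) (h₂ : Integrable ξ₂)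
    (h₁₂ : MemLp ξ₁ 2) (h₂₂ : MemLp ξ₂ 2)
    (hν₁ : ν₁ = fun t => ξ₁ t - (κ : ℂ) * Sop' κ ω_d ξ₁ t)
    (hν₂ : ν₂ = fun t => ξ₂ t - (κ : ℂ) * Sop' κ ω_d ξ₂ t) :
    (∫ p₂ : ℝ, ∫ p₁ : ℝ, ‖ν₁ p₁ * ν₂ p₂ + ν₁ p₂ * ν₂ p₁‖^2)
      = 2 * (∫ t : ℝ, ‖ξ₁ t‖^2) * (∫ t : ℝ, ‖ξ₂ t‖^2)
        + 2 * ‖∫ t : ℝ, (starRingEnd ℂ) (ξ₁ t) * ξ₂ t‖^2 := by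
  have hm1 : MemLp ν₁ 2 := by
    rw [hν₁]; exact h₁₂.sub ((Sop_memℒp_two hκ h₁).const_mul _)
  have hm2 : MemLp ν₂ 2 := by
    rw [hν₂]; exact h₂₂.sub ((Sop_memℒp_two hκ h₂).const_mul _)
  have iso11 : (∫ t : ℝ, (starRingEnd ℂ) (ν₁ t) * ν₁ t)
      = ∫ t : ℝ, (starRingEnd ℂ) (ξ₁ t) * ξ₁ t := by
    rw [hν₁]; exact isometry_lem hκ h₁ h₁ h₁₂ h₁₂
  have iso22 : (∫ t : ℝ, (starRingEnd ℂ) (ν₂ t) * ν₂ t)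
      = ∫ t : ℝ, (starRingEnd ℂ) (ξ₂ t) * ξ₂ t := by
    rw [hν₂]; exact isometry_lem hκ h₂ h₂ h₂₂ h₂₂
  have iso12 : (∫ t : ℝ, (starRingEnd ℂ) (ν₁ t) * ν₂ t)
      = ∫ t : ℝ, (starRingEnd ℂ) (ξ₁ t) * ξ₂ t := by
    rw [hν₁, hν₂]; exact isometry_lem hκ h₁ h₂ h₁₂ h₂₂
  have e1 : (∫ t : ℝ, ‖ν₁ t‖^2) = ∫ t : ℝ, ‖ξ₁ t‖^2 :=
    Complex.ofReal_inj.mp (by rw [sq_norm_integral_eq, sq_norm_integral_eq, iso11])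
  have e2 : (∫ t : ℝ, ‖ν₂ t‖^2) = ∫ t : ℝ, ‖ξ₂ t‖^2 :=
    Complex.ofReal_inj.mp (by rw [sq_norm_integral_eq, sq_norm_integral_eq, iso22])
  rw [final_comp hm1 hm2, e1, e2, iso12]

end M

open MeasureTheory Complex


theorem stmt_11 (κ ω_d : ℝ) (hκ : 0 < κ) (ξ₁ ξ₂ : ℝ → ℂ)
    (h₁ : Integrable ξ₁) (h₂ : Integrable ξ₂)
    (h₁₂ : MemLp ξ₁ 2) (h₂₂ : MemLp ξ₂ 2)
    (ν₁ ν₂ : ℝ → ℂ)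
    (hν₁ : ∀ t : ℝ, ν₁ t = ξ₁ t - (κ : ℂ) *
      ∫ r in Set.Iic t,
        Complex.exp (-((κ : ℂ) / 2 + Complex.I * (ω_d : ℂ)) * ((t : ℂ) - (r : ℂ))) * ξ₁ r)
    (hν₂ : ∀ t : ℝ, ν₂ t = ξ₂ t - (κ : ℂ) *
      ∫ r in Set.Iic t,
        Complex.exp (-((κ : ℂ) / 2 + Complex.I * (ω_d : ℂ)) * ((t : ℂ) - (r : ℂ))) * ξ₂ r) :
    (∫ p₂ : ℝ, ∫ p₁ : ℝ, ‖ν₁ p₁ * ν₂ p₂ + ν₁ p₂ * ν₂ p₁‖ ^ 2)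
      = 2 * (∫ t : ℝ, ‖ξ₁ t‖ ^ 2) * (∫ t : ℝ, ‖ξ₂ t‖ ^ 2)
        + 2 * ‖∫ t : ℝ, (starRingEnd ℂ) (ξ₁ t) * ξ₂ t‖ ^ 2 ∧
    (((∫ t : ℝ, ‖ξ₁ t‖ ^ 2) = 1 ∧ (∫ t : ℝ, ‖ξ₂ t‖ ^ 2) = 1) →
      (∫ p₂ : ℝ, ∫ p₁ : ℝ, ‖ν₁ p₁ * ν₂ p₂ + ν₁ p₂ * ν₂ p₁‖ ^ 2)
        = 2 * (1 + ‖∫ t : ℝ, (starRingEnd ℂ) (ξ₁ t) * ξ₂ t‖ ^ 2)) := by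
  have hmain := main_calc (ω_d := ω_d) hκ h₁ h₂ h₁₂ h₂₂ (funext hν₁) (funext hν₂)
  refine ⟨hmain, ?_⟩
  rintro ⟨e1, e2⟩
  rw [hmain, e1, e2]
  ring
end

section
/- Let κ₁, κ₂ > 0 and ξ ∈ L¹(ℝ, ℂ). Define ν₁(t) = ξ(t) − κ₁ ∫_{−∞}^{t} e^{−((κ₁+κ₂)/2)(t − r)} ξ(r) dr and ν₂(t) = −√(κ₁κ₂) ∫_{−∞}^{t} e^{−((κ₁+κ₂)/2)(t − r)} ξ(r) dr. Then ν₁, ν₂ ∈ L¹(ℝ, ℂ) and for every ω ∈ ℝ: ∫ e^{−iωt} ν₁(t) dt = ((iω − (κ₁−κ₂)/2)/(iω + (κ₁+κ₂)/2)) · ∫ e^{−iωt} ξ(t) dt and ∫ e^{−iωt} ν₂(t) dt = (−√(κ₁κ₂)/(iω + (κ₁+κ₂)/2)) · ∫ e^{−iωt} ξ(t) dt. -/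
open MeasureTheory Complex

lemma aux_exp_int {a : ℂ} (ha : 0 < a.re) :
    IntegrableOn (fun t : ℝ => Complex.exp (-a * t)) (Set.Ioi 0) := by
  refine (exp_neg_integrableOn_Ioi 0 ha).mono'
    (Continuous.aestronglyMeasurable (by continuity)) ?_
  filter_upwards with x
  simp [Complex.norm_exp, neg_mul, mul_comm]

lemma aux_exp_integral_s14 {a : ℂ} (ha : 0 < a.re) :
    (∫ t : ℝ in Set.Ioi 0, Complex.exp (-a * t)) = a⁻¹ := by
  have hderiv : ∀ x ∈ Set.Ici (0:ℝ), HasDerivAt (fun t : ℝ => -a⁻¹ * Complex.exp (-a * t))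
      (Complex.exp (-a * x)) x := by
    intro x _
    have h1 : HasDerivAt (fun t : ℝ => -a * (t:ℂ)) (-a) x := by
      simpa using ((hasDerivAt_id (x:ℂ)).const_mul (-a)).comp_ofReal
    have := (h1.cexp).const_mul (-a⁻¹)
    convert this using 1
    have ha0 : a ≠ 0 := fun h => by simp [h] at ha
    · rfl
    · have ha0 : a ≠ 0 := fun h => by simp [h] at ha
      field_simp
  have htend : Filter.Tendsto (fun t : ℝ => -a⁻¹ * Complex.exp (-a * t))
      Filter.atTop (nhds 0) := by
    rw [tendsto_zero_iff_norm_tendsto_zero]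
    have : (fun t : ℝ => ‖-a⁻¹ * Complex.exp (-a * t)‖)
        = fun t : ℝ => ‖a⁻¹‖ * Real.exp (-(a.re * t)) := by
      funext t
      simp [Complex.norm_exp, neg_mul]
    rw [this]
    rw [show (0:ℝ) = ‖a⁻¹‖ * 0 by ring]
    have h1 : Filter.Tendsto (fun t : ℝ => -(a.re * t)) Filter.atTop Filter.atBot := by
      apply Filter.tendsto_neg_atBot_iff.mpr
      exact Filter.Tendsto.const_mul_atTop ha Filter.tendsto_id
    exact (Real.tendsto_exp_atBot.comp h1).const_mul _
  have := integral_Ioi_of_hasDerivAt_of_tendsto' hderiv (aux_exp_int ha) htend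
  rw [this]
  have ha0 : a ≠ 0 := fun h => by simp [h] at ha
  simp

lemma aux_conv (c : ℂ) (hc : 0 < c.re) (ξ : ℝ → ℂ) (hξ : Integrable ξ) :
    Integrable (fun t : ℝ => ∫ r in Set.Iic t,
        Complex.exp (-c * ((t : ℂ) - (r : ℂ))) * ξ r) ∧
    ∀ ω : ℝ, (∫ t : ℝ, Complex.exp (-(Complex.I * (ω : ℂ) * (t : ℂ))) *
        ∫ r in Set.Iic t, Complex.exp (-c * ((t : ℂ) - (r : ℂ))) * ξ r)
      = (c + Complex.I * ω)⁻¹ *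
        ∫ t : ℝ, Complex.exp (-(Complex.I * (ω : ℂ) * (t : ℂ))) * ξ t := by
  set g : ℝ → ℂ := Set.indicator (Set.Ici 0) (fun t : ℝ => Complex.exp (-c * t)) with hg_def
  have hg : Integrable g := by
    rw [hg_def, integrable_indicator_iff measurableSet_Ici, IntegrableOn,
      Measure.restrict_congr_set Ioi_ae_eq_Ici.symm]
    exact aux_exp_int hc
  have hF : ∀ t : ℝ, (∫ r in Set.Iic t, Complex.exp (-c * ((t : ℂ) - (r : ℂ))) * ξ r)
      = ∫ r : ℝ, ξ r * g (t - r) := by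
    intro t
    rw [← integral_indicator measurableSet_Iic]
    congr 1
    funext r
    by_cases h : r ≤ t
    · have h2 : (0:ℝ) ≤ t - r := by linarith
      simp only [Set.indicator_of_mem (Set.mem_Iic.mpr h), hg_def,
        Set.indicator_of_mem (Set.mem_Ici.mpr h2)]
      push_cast
      ring
    · have h2 : ¬ (0:ℝ) ≤ t - r := by push_neg at h ⊢; linarith
      simp [Set.indicator_of_notMem, h, h2, hg_def]
  have hFint : Integrable (fun t : ℝ => ∫ r in Set.Iic t,
      Complex.exp (-c * ((t : ℂ) - (r : ℂ))) * ξ r) := by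
    have := hξ.integrable_convolution (ContinuousLinearMap.mul ℝ ℂ) hg
    refine this.congr ?_
    filter_upwards with t
    rw [hF t, convolution_def]
    rfl
  refine ⟨hFint, fun ω => ?_⟩
  set e : ℝ → ℂ := fun t => Complex.exp (-(Complex.I * (ω : ℂ) * (t : ℂ))) with he_def
  have he_norm : ∀ t : ℝ, ‖e t‖ = 1 := by
    intro t; simp [he_def, Complex.norm_exp]
  have he_cont : Continuous e := by rw [he_def]; continuity
  have he_add : ∀ s r : ℝ, e (s + r) = e s * e r := by
    intro s r
    rw [he_def]
    simp only [← Complex.exp_add]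
    push_cast
    ring_nf
  have hint2 : Integrable (fun p : ℝ × ℝ => ξ p.2 * g (p.1 - p.2))
      (volume.prod volume) := hξ.convolution_integrand (ContinuousLinearMap.mul ℝ ℂ) hg
  have hint : Integrable (fun p : ℝ × ℝ => e p.1 * (ξ p.2 * g (p.1 - p.2)))
      (volume.prod volume) := by
    refine hint2.bdd_mul (c := 1) ?_ (Filter.Eventually.of_forall fun p => (he_norm p.1).le)
    exact (he_cont.comp continuous_fst).aestronglyMeasurable
  have hC : (∫ s : ℝ, e s * g s) = (c + Complex.I * ω)⁻¹ := by
    have : (fun s : ℝ => e s * g s)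
        = Set.indicator (Set.Ici 0) (fun s : ℝ => Complex.exp (-(c + Complex.I * ω) * s)) := by
      funext s
      rw [hg_def]
      by_cases h : (0:ℝ) ≤ s
      · simp only [Set.indicator_of_mem (Set.mem_Ici.mpr h), he_def, ← Complex.exp_add]
        congr 1
        ring
      · simp [Set.indicator_of_notMem, h]
    rw [this, integral_indicator measurableSet_Ici,
      Measure.restrict_congr_set Ioi_ae_eq_Ici.symm]
    exact aux_exp_integral_s14 (by simpa using hc)
  calc (∫ t : ℝ, e t * ∫ r in Set.Iic t, Complex.exp (-c * ((t : ℂ) - (r : ℂ))) * ξ r)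
      = ∫ t : ℝ, ∫ r : ℝ, e t * (ξ r * g (t - r)) := by
        congr 1; funext t; rw [hF t, ← integral_const_mul]
    _ = ∫ r : ℝ, ∫ t : ℝ, e t * (ξ r * g (t - r)) := integral_integral_swap hint
    _ = ∫ r : ℝ, (e r * ξ r) * ∫ s : ℝ, e s * g s := by
        congr 1; funext r
        have : (fun t : ℝ => e t * (ξ r * g (t - r)))
            = fun t : ℝ => (fun s : ℝ => e (s + r) * (ξ r * g s)) (t - r) := by
          funext t; simp
        rw [this, integral_sub_right_eq_self (fun s : ℝ => e (s + r) * (ξ r * g s)) r]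
        rw [← integral_const_mul]
        congr 1; funext s
        rw [he_add]
        ring
    _ = (∫ r : ℝ, e r * ξ r) * ∫ s : ℝ, e s * g s := integral_mul_const _ _
    _ = (c + Complex.I * ω)⁻¹ * ∫ t : ℝ, e t * ξ t := by rw [hC]; ring

lemma aux_mul_int (ω : ℝ) {f : ℝ → ℂ} (hf : Integrable f) :
    Integrable (fun t : ℝ => Complex.exp (-(Complex.I * (ω : ℂ) * (t : ℂ))) * f t) :=
  hf.bdd_mul (c := 1) (Continuous.aestronglyMeasurable (by continuity))
    (Filter.Eventually.of_forall fun t => by simp [Complex.norm_exp])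

theorem stmt_14 (κ₁ κ₂ : ℝ) (h₁ : 0 < κ₁) (h₂ : 0 < κ₂) (ξ : ℝ → ℂ) (hξ : Integrable ξ)
    (ν₁ ν₂ : ℝ → ℂ)
    (hν₁ : ∀ t : ℝ, ν₁ t = ξ t - (κ₁ : ℂ) *
      ∫ r in Set.Iic t,
        Complex.exp (-(((κ₁ : ℂ) + (κ₂ : ℂ)) / 2) * ((t : ℂ) - (r : ℂ))) * ξ r)
    (hν₂ : ∀ t : ℝ, ν₂ t = -(Real.sqrt (κ₁ * κ₂) : ℂ) *
      ∫ r in Set.Iic t,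
        Complex.exp (-(((κ₁ : ℂ) + (κ₂ : ℂ)) / 2) * ((t : ℂ) - (r : ℂ))) * ξ r) :
    Integrable ν₁ ∧ Integrable ν₂ ∧
    (∀ ω : ℝ, (∫ t : ℝ, Complex.exp (-(Complex.I * (ω : ℂ) * (t : ℂ))) * ν₁ t)
      = ((Complex.I * (ω : ℂ) - ((κ₁ : ℂ) - (κ₂ : ℂ)) / 2) /
          (Complex.I * (ω : ℂ) + ((κ₁ : ℂ) + (κ₂ : ℂ)) / 2)) *
        ∫ t : ℝ, Complex.exp (-(Complex.I * (ω : ℂ) * (t : ℂ))) * ξ t) ∧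
    (∀ ω : ℝ, (∫ t : ℝ, Complex.exp (-(Complex.I * (ω : ℂ) * (t : ℂ))) * ν₂ t)
      = (-(Real.sqrt (κ₁ * κ₂) : ℂ) /
          (Complex.I * (ω : ℂ) + ((κ₁ : ℂ) + (κ₂ : ℂ)) / 2)) *
        ∫ t : ℝ, Complex.exp (-(Complex.I * (ω : ℂ) * (t : ℂ))) * ξ t) := by
  set c : ℂ := ((κ₁ : ℂ) + (κ₂ : ℂ)) / 2 with hc_def
  have hcr : c.re = (κ₁ + κ₂) / 2 := by
    rw [hc_def, show ((κ₁ : ℂ) + (κ₂ : ℂ)) / 2 = (((κ₁ + κ₂) / 2 : ℝ) : ℂ) by push_cast; ring,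
      Complex.ofReal_re]
  have hc : 0 < c.re := by rw [hcr]; positivity
  obtain ⟨hFint, hFω⟩ := aux_conv c hc ξ hξ
  set F : ℝ → ℂ := fun t : ℝ => ∫ r in Set.Iic t,
    Complex.exp (-c * ((t : ℂ) - (r : ℂ))) * ξ r with hF_def
  have hν₁' : ν₁ = fun t => ξ t - (κ₁ : ℂ) * F t := funext hν₁
  have hν₂' : ν₂ = fun t => -(Real.sqrt (κ₁ * κ₂) : ℂ) * F t := funext hν₂
  have hne : ∀ ω : ℝ, Complex.I * (ω : ℂ) + c ≠ 0 := by
    intro ω h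
    have := congrArg Complex.re h
    simp only [Complex.add_re, Complex.mul_re, Complex.I_re, Complex.I_im,
      Complex.ofReal_re, Complex.ofReal_im, Complex.zero_re] at this
    rw [hcr] at this
    nlinarith
  refine ⟨?_, ?_, ?_, ?_⟩
  · rw [hν₁']; exact hξ.sub (hFint.const_mul _)
  · rw [hν₂']; exact hFint.const_mul _
  · intro ω
    have key := hFω ω
    rw [hν₁']
    have : (∫ t : ℝ, Complex.exp (-(Complex.I * (ω : ℂ) * (t : ℂ))) *
        (ξ t - (κ₁ : ℂ) * F t))
        = (∫ t : ℝ, Complex.exp (-(Complex.I * (ω : ℂ) * (t : ℂ))) * ξ t)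
          - (κ₁ : ℂ) * ∫ t : ℝ, Complex.exp (-(Complex.I * (ω : ℂ) * (t : ℂ))) * F t := by
      rw [← integral_const_mul, ← integral_sub (aux_mul_int ω hξ)
        ((aux_mul_int ω hFint).const_mul _)]
      congr 1; funext t; ring
    rw [this, key]
    have h0 := hne ω
    have h0' : c + Complex.I * (ω : ℂ) ≠ 0 := by rwa [add_comm]
    rw [show Complex.I * (ω : ℂ) + ((κ₁ : ℂ) + (κ₂ : ℂ)) / 2 = Complex.I * (ω : ℂ) + c from rfl]
    field_simp
    rw [hc_def]
    ring
  · intro ω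
    have key := hFω ω
    rw [hν₂']
    rw [show (fun t => -(Real.sqrt (κ₁ * κ₂) : ℂ) * F t)
      = fun t => -((Real.sqrt (κ₁ * κ₂) : ℂ)) * F t from rfl]
    have : (∫ t : ℝ, Complex.exp (-(Complex.I * (ω : ℂ) * (t : ℂ))) *
        (-(Real.sqrt (κ₁ * κ₂) : ℂ) * F t))
        = -(Real.sqrt (κ₁ * κ₂) : ℂ) *
          ∫ t : ℝ, Complex.exp (-(Complex.I * (ω : ℂ) * (t : ℂ))) * F t := by
      rw [← integral_const_mul]
      congr 1; funext t; ring
    rw [this, key]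
    have h0 := hne ω
    have h0' : c + Complex.I * (ω : ℂ) ≠ 0 := by rwa [add_comm]
    rw [show Complex.I * (ω : ℂ) + ((κ₁ : ℂ) + (κ₂ : ℂ)) / 2 = Complex.I * (ω : ℂ) + c from rfl]
    field_simp
    ring
end

section
/- Let κ > 0 and let ξ : ℝ → ℂ be measurable with ξ(t) = 0 for all t > 0 and ∫_{−∞}^{0} e^{κ r} |ξ(r)| dr < ∞. Define v(t) = ξ(t) − κ ∫_{−∞}^{t} e^{−κ(t − r)} ξ(r) dr, w(t) = −κ ∫_{−∞}^{t} e^{−κ(t − r)} ξ(r) dr, and for p₁ ≥ p₂ set χ(p₁, p₂) = 4κ e^{−κ(p₁ + p₂)} ∫_{−∞}^{p₂} e^{2κ r} ξ(r) w(r) dr. Then for all p₁ ≥ p₂ > 0: v(p₁) v(p₂) + w(p₁) w(p₂) + χ(p₁, p₂) = 0, and likewise v(p₁) w(p₂) + v(p₂) w(p₁) + χ(p₁, p₂) = 0. -/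
open MeasureTheory Complex

theorem stmt_16 (κ : ℝ) (hκ : 0 < κ) (ξ : ℝ → ℂ) (hm : Measurable ξ)
    (hsupp : ∀ t : ℝ, 0 < t → ξ t = 0)
    (hint : IntegrableOn (fun r : ℝ => Real.exp (κ * r) * ‖ξ r‖) (Set.Iic 0))
    (v w : ℝ → ℂ) (χ : ℝ → ℝ → ℂ)
    (hv : ∀ t : ℝ, v t = ξ t - (κ : ℂ) *
      ∫ r in Set.Iic t, Complex.exp (-(κ : ℂ) * ((t : ℂ) - (r : ℂ))) * ξ r)
    (hw : ∀ t : ℝ, w t = -(κ : ℂ) *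
      ∫ r in Set.Iic t, Complex.exp (-(κ : ℂ) * ((t : ℂ) - (r : ℂ))) * ξ r)
    (hχ : ∀ p₁ p₂ : ℝ, p₂ ≤ p₁ → χ p₁ p₂ = 4 * (κ : ℂ) *
      Complex.exp (-(κ : ℂ) * ((p₁ : ℂ) + (p₂ : ℂ))) *
      ∫ r in Set.Iic p₂, Complex.exp (2 * (κ : ℂ) * (r : ℂ)) * ξ r * w r) :
    ∀ p₁ p₂ : ℝ, p₂ ≤ p₁ → 0 < p₂ →
      v p₁ * v p₂ + w p₁ * w p₂ + χ p₁ p₂ = 0 ∧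
      v p₁ * w p₂ + v p₂ * w p₁ + χ p₁ p₂ = 0 := by
  -- The weighted pulse
  set g : ℝ → ℂ := fun r => (Real.exp (κ * r) : ℂ) * ξ r with hg_def
  have hg_meas : Measurable g := by
    exact (Complex.measurable_ofReal.comp
      (Real.measurable_exp.comp (measurable_const_mul κ))).mul hm
  have hg0 : ∀ r : ℝ, 0 < r → g r = 0 := by
    intro r hr; simp [hg_def, hsupp r hr]
  -- g is integrable on ℝ
  have hg_int : Integrable g := by
    have h1 : IntegrableOn g (Set.Iic 0) := by
      refine Integrable.mono' hint (hg_meas.aestronglyMeasurable.restrict) ?_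
      filter_upwards with r
      have heq : ‖g r‖ = Real.exp (κ * r) * ‖ξ r‖ := by
        show ‖(Real.exp (κ * r) : ℂ) * ξ r‖ = _
        rw [norm_mul, Complex.norm_real, Real.norm_eq_abs,
          _root_.abs_of_nonneg (Real.exp_nonneg _)]
      exact le_of_eq heq
    have h2 : IntegrableOn g (Set.Ioi 0) := by
      refine (integrableOn_congr_fun (fun r hr => (hg0 r hr).symm) measurableSet_Ioi).mp ?_
      exact integrableOn_zero
    have := h1.union h2
    rwa [Set.Iic_union_Ioi, integrableOn_univ] at this
  set S : ℂ := ∫ r, g r with hS_def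
  set I : ℝ → ℂ := fun t => ∫ r in Set.Iic t, g r with hI_def
  -- I t = S for t ≥ 0
  have hIS : ∀ t : ℝ, 0 ≤ t → I t = S := by
    intro t ht
    exact setIntegral_eq_integral_of_forall_compl_eq_zero
      (fun r hr => hg0 r (lt_of_le_of_lt ht (lt_of_not_ge hr)))
  -- w in terms of I
  have hw' : ∀ t : ℝ, w t = -(κ : ℂ) * Complex.exp (-(κ : ℂ) * (t : ℂ)) * I t := by
    intro t
    rw [hw t]
    have : ∀ r ∈ Set.Iic t, Complex.exp (-(κ : ℂ) * ((t : ℂ) - (r : ℂ))) * ξ r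
        = Complex.exp (-(κ : ℂ) * (t : ℂ)) * g r := by
      intro r _
      have : ((Real.exp (κ * r) : ℝ) : ℂ) = Complex.exp ((κ : ℂ) * (r : ℂ)) := by
        rw [Complex.ofReal_exp]; push_cast; ring_nf
      simp only [hg_def, this]
      rw [show -(κ : ℂ) * ((t : ℂ) - (r : ℂ))
          = (-(κ : ℂ) * (t : ℂ)) + (κ : ℂ) * (r : ℂ) by ring, Complex.exp_add]
      ring
    rw [setIntegral_congr_fun measurableSet_Iic this, integral_const_mul]
    ring
  -- Fubini symmetrization: ∫ g·I = S²/2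
  set F : ℝ × ℝ → ℂ := fun z => g z.1 * g z.2 with hF_def
  have hF_int : Integrable F (volume.prod volume) := hg_int.mul_prod hg_int
  have hDle : MeasurableSet {z : ℝ × ℝ | z.2 ≤ z.1} :=
    measurableSet_le measurable_snd measurable_fst
  have hDge : MeasurableSet {z : ℝ × ℝ | z.1 ≤ z.2} :=
    measurableSet_le measurable_fst measurable_snd
  set H : ℝ × ℝ → ℂ := Set.indicator {z : ℝ × ℝ | z.2 ≤ z.1} F with hH_def
  set H' : ℝ × ℝ → ℂ := Set.indicator {z : ℝ × ℝ | z.1 ≤ z.2} F with hH'_def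
  have hH_int : Integrable H (volume.prod volume) := hF_int.indicator hDle
  have hH'_int : Integrable H' (volume.prod volume) := hF_int.indicator hDge
  set A : ℂ := ∫ z, H z ∂(volume.prod volume) with hA_def
  -- A as an iterated integral
  have hA : A = ∫ r, g r * I r := by
    rw [hA_def, integral_prod _ hH_int]
    refine integral_congr_ae (Filter.Eventually.of_forall fun x => ?_)
    have hinner : ∀ y : ℝ, H (x, y) = Set.indicator (Set.Iic x) (fun y => g x * g y) y := by
      intro y
      by_cases h : y ≤ x <;>
        simp [hH_def, hF_def, Set.indicator, h]
    simp only [hinner]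
    rw [integral_indicator measurableSet_Iic, integral_const_mul]
  -- B = A by swapping
  have hBA : (∫ z, H' z ∂(volume.prod volume)) = A := by
    have hswap : ∀ z : ℝ × ℝ, H z.swap = H' z := by
      intro z
      by_cases h : z.1 ≤ z.2 <;>
        simp [hH_def, hH'_def, hF_def, Set.indicator, Prod.swap, h, mul_comm]
    rw [hA_def, ← integral_prod_swap H]
    exact integral_congr_ae (Filter.Eventually.of_forall fun z => (hswap z).symm)
  -- diagonal is null
  have hdiag : (volume.prod volume) {z : ℝ × ℝ | z.1 = z.2} = 0 := by
    have hD : MeasurableSet {z : ℝ × ℝ | z.1 = z.2} :=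
      measurableSet_eq_fun measurable_fst measurable_snd
    rw [Measure.prod_apply hD]
    have : ∀ x : ℝ, (Prod.mk x ⁻¹' {z : ℝ × ℝ | z.1 = z.2}) = {x} := by
      intro x; ext y; simp [eq_comm]
    simp [this]
  -- A + A = S²
  have hAA : A + A = S ^ 2 := by
    nth_rewrite 2 [← hBA]
    rw [hA_def, ← integral_add hH_int hH'_int]
    have hae : (fun z => H z + H' z) =ᵐ[volume.prod volume] F := by
      rw [Filter.eventuallyEq_iff_exists_mem]
      refine ⟨{z : ℝ × ℝ | z.1 = z.2}ᶜ, ?_, ?_⟩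
      · rw [mem_ae_iff, compl_compl]; exact hdiag
      · intro z hz
        have hne : z.1 ≠ z.2 := hz
        rcases lt_or_gt_of_ne hne with h | h
        · simp [hH_def, hH'_def, Set.indicator, not_le.mpr h, le_of_lt h]
        · simp [hH_def, hH'_def, Set.indicator, not_le.mpr h, le_of_lt h]
    rw [integral_congr_ae hae, hF_def]
    rw [show (∫ z : ℝ × ℝ, g z.1 * g z.2 ∂(volume.prod volume)) = S * S from
      integral_prod_mul g g]
    ring
  -- main computation
  intro p₁ p₂ h12 hp₂
  have hp₁ : 0 < p₁ := lt_of_lt_of_le hp₂ h12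
  have hvw₁ : v p₁ = w p₁ := by rw [hv, hw, hsupp p₁ hp₁]; ring
  have hvw₂ : v p₂ = w p₂ := by rw [hv, hw, hsupp p₂ hp₂]; ring
  -- the χ integral
  have hχint : (∫ r in Set.Iic p₂, Complex.exp (2 * (κ : ℂ) * (r : ℂ)) * ξ r * w r)
      = -(κ : ℂ) * A := by
    have hcongr : ∀ r ∈ Set.Iic p₂, Complex.exp (2 * (κ : ℂ) * (r : ℂ)) * ξ r * w r
        = -(κ : ℂ) * (g r * I r) := by
      intro r _
      rw [hw' r]
      have hre : ((Real.exp (κ * r) : ℝ) : ℂ) = Complex.exp ((κ : ℂ) * (r : ℂ)) := by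
        rw [Complex.ofReal_exp]; push_cast; ring_nf
      have hexp : Complex.exp (2 * (κ : ℂ) * (r : ℂ)) * Complex.exp (-(κ : ℂ) * (r : ℂ))
          = Complex.exp ((κ : ℂ) * (r : ℂ)) := by
        rw [← Complex.exp_add]; ring_nf
      simp only [hg_def, hre]
      calc Complex.exp (2 * (κ : ℂ) * (r : ℂ)) * ξ r
            * (-(κ : ℂ) * Complex.exp (-(κ : ℂ) * (r : ℂ)) * I r)
          = -(κ : ℂ) * ((Complex.exp (2 * (κ : ℂ) * (r : ℂ))
            * Complex.exp (-(κ : ℂ) * (r : ℂ))) * ξ r * I r) := by ring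
        _ = -(κ : ℂ) * (Complex.exp ((κ : ℂ) * (r : ℂ)) * ξ r * I r) := by rw [hexp]
        _ = -(κ : ℂ) * (Complex.exp ((κ : ℂ) * (r : ℂ)) * ξ r * I r) := rfl
    rw [setIntegral_congr_fun measurableSet_Iic hcongr, integral_const_mul]
    congr 1
    rw [hA]
    exact setIntegral_eq_integral_of_forall_compl_eq_zero
      (fun r hr => by rw [hg0 r (lt_trans hp₂ (lt_of_not_ge hr))]; ring)
  -- assemble
  have hwp₁ : w p₁ = -(κ : ℂ) * Complex.exp (-(κ : ℂ) * (p₁ : ℂ)) * S := by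
    rw [hw' p₁, hIS p₁ hp₁.le]
  have hwp₂ : w p₂ = -(κ : ℂ) * Complex.exp (-(κ : ℂ) * (p₂ : ℂ)) * S := by
    rw [hw' p₂, hIS p₂ hp₂.le]
  have hχval : χ p₁ p₂ = 4 * (κ : ℂ)
      * (Complex.exp (-(κ : ℂ) * (p₁ : ℂ)) * Complex.exp (-(κ : ℂ) * (p₂ : ℂ)))
      * (-(κ : ℂ) * A) := by
    rw [hχ p₁ p₂ h12, hχint, ← Complex.exp_add]
    ring_nf
  have hA2 : 2 * A = S ^ 2 := by rw [two_mul, hAA]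
  have key : 2 * (w p₁ * w p₂) + χ p₁ p₂ = 0 := by
    rw [hwp₁, hwp₂, hχval]
    have : (4 : ℂ) * (κ : ℂ)
        * (Complex.exp (-(κ : ℂ) * (p₁ : ℂ)) * Complex.exp (-(κ : ℂ) * (p₂ : ℂ)))
        * (-(κ : ℂ) * A)
        = -2 * (κ : ℂ) ^ 2
          * (Complex.exp (-(κ : ℂ) * (p₁ : ℂ)) * Complex.exp (-(κ : ℂ) * (p₂ : ℂ)))
          * (2 * A) := by ring
    rw [this, hA2]
    ring
  constructor
  · rw [hvw₁, hvw₂]; linear_combination key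
  · rw [hvw₁, hvw₂]; linear_combination key
end

section
/- Let κ > 0 and γ > 0, and define ξ : ℝ → ℂ by ξ(t) = −√γ e^{(γ/2)t} for t ≤ 0 and ξ(t) = 0 for t > 0. Define ν(t) = ξ(t) − κ ∫_{−∞}^{t} e^{−(κ/2)(t − r)} ξ(r) dr. Then ν(t) = ((κ − γ)/(κ + γ))·√γ·e^{(γ/2)t} for t ≤ 0, and ν(t) = (2κ√γ/(κ + γ))·e^{−(κ/2)t} for t > 0. In particular, if γ = κ then ν(t) = 0 for all t ≤ 0 and ν(t) = √κ e^{−(κ/2)t} for t > 0. -/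
open MeasureTheory Complex

lemma expMul_hasDeriv (b : ℝ) (hb : b ≠ 0) (x : ℝ) :
    HasDerivAt (fun x => Real.exp (b * x) / b) (Real.exp (b * x)) x := by
  have h : HasDerivAt (fun y : ℝ => Real.exp (b * y)) (Real.exp (b * x) * (b * 1)) x :=
    HasDerivAt.exp ((hasDerivAt_id x).const_mul b)
  have h2 := h.div_const b
  simpa [mul_div_assoc, mul_div_cancel_right₀ _ hb] using h2

lemma expMul_cont (b : ℝ) : Continuous fun x : ℝ => Real.exp (b * x) :=
  Real.continuous_exp.comp (continuous_const.mul continuous_id)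

lemma expMul_intervalIntegral (b : ℝ) (hb : b ≠ 0) (y t : ℝ) :
    ∫ x in y..t, Real.exp (b * x) = Real.exp (b * t) / b - Real.exp (b * y) / b :=
  intervalIntegral.integral_eq_sub_of_hasDerivAt (fun x _ => expMul_hasDeriv b hb x)
    ((expMul_cont b).intervalIntegrable _ _)

lemma expMul_integrableOn (b t : ℝ) (hb : 0 < b) :
    IntegrableOn (fun r => Real.exp (b * r)) (Set.Iic t) := by
  refine integrableOn_Iic_of_intervalIntegral_norm_bounded (Real.exp (b * t) / b) t
    (fun y => (expMul_cont b).integrableOn_Ioc)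
    Filter.tendsto_id (Filter.Eventually.of_forall fun y => ?_)
  simp only [id]
  have h1 : ∀ x, ‖Real.exp (b * x)‖ = Real.exp (b * x) := fun x =>
    Real.norm_of_nonneg (Real.exp_pos _).le
  simp_rw [h1, expMul_intervalIntegral b hb.ne']
  have h2 : 0 ≤ Real.exp (b * y) / b := by positivity
  linarith

lemma expMul_integral (b t : ℝ) (hb : 0 < b) :
    ∫ r in Set.Iic t, Real.exp (b * r) = Real.exp (b * t) / b := by
  have htend : Filter.Tendsto (fun x => Real.exp (b * x) / b) Filter.atBot (nhds 0) := by
    have h1 : Filter.Tendsto (fun x : ℝ => b * x) Filter.atBot Filter.atBot :=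
      Filter.tendsto_id.const_mul_atBot hb
    simpa using (Real.tendsto_exp_atBot.comp h1).div_const b
  have := integral_Iic_of_hasDerivAt_of_tendsto' (a := t)
    (fun x _ => expMul_hasDeriv b hb.ne' x) (expMul_integrableOn b t hb) htend
  simpa using this

lemma expMul_integral_C (b t : ℝ) (hb : 0 < b) :
    ∫ r in Set.Iic t, ((Real.exp (b * r) : ℝ) : ℂ) = ((Real.exp (b * t) / b : ℝ) : ℂ) := by
  have hcoe : ∀ r : ℝ, (r : ℂ) = @RCLike.ofReal ℂ _ r := fun r => rfl
  rw [← expMul_integral b t hb, hcoe]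
  simp_rw [hcoe]
  exact integral_ofReal

theorem stmt_17 (κ γ : ℝ) (hκ : 0 < κ) (hγ : 0 < γ) (ξ : ℝ → ℂ)
    (hξ : ∀ t : ℝ, ξ t =
      if t ≤ 0 then -(Real.sqrt γ : ℂ) * Complex.exp ((γ / 2 : ℝ) * (t : ℂ)) else 0)
    (ν : ℝ → ℂ)
    (hν : ∀ t : ℝ, ν t = ξ t - (κ : ℂ) *
      ∫ r in Set.Iic t,
        Complex.exp (-((κ : ℂ) / 2) * ((t : ℂ) - (r : ℂ))) * ξ r) :
    (∀ t : ℝ, t ≤ 0 →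
      ν t = (((κ : ℂ) - (γ : ℂ)) / ((κ : ℂ) + (γ : ℂ))) * (Real.sqrt γ : ℂ) *
        Complex.exp ((γ / 2 : ℝ) * (t : ℂ))) ∧
    (∀ t : ℝ, 0 < t →
      ν t = (2 * (κ : ℂ) * (Real.sqrt γ : ℂ) / ((κ : ℂ) + (γ : ℂ))) *
        Complex.exp (-((κ : ℂ) / 2) * (t : ℂ))) ∧
    (γ = κ →
      (∀ t : ℝ, t ≤ 0 → ν t = 0) ∧
      (∀ t : ℝ, 0 < t →
        ν t = (Real.sqrt κ : ℂ) * Complex.exp (-((κ : ℂ) / 2) * (t : ℂ)))) := by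
  have hb : 0 < (κ + γ) / 2 := by positivity
  have hsum : (κ : ℂ) + γ ≠ 0 := by
    have h : (0:ℝ) < κ + γ := by linarith
    exact_mod_cast (Complex.ofReal_ne_zero.2 h.ne' : ((κ + γ : ℝ) : ℂ) ≠ 0)
  have key : ∀ t s : ℝ, s ≤ 0 →
      (∫ r in Set.Iic s, Complex.exp (-((κ : ℂ) / 2) * ((t : ℂ) - (r : ℂ))) * ξ r)
        = ((-Real.sqrt γ * Real.exp (-(κ / 2) * t) : ℝ) : ℂ) *
          ((Real.exp ((κ + γ) / 2 * s) / ((κ + γ) / 2) : ℝ) : ℂ) := by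
    intro t s hs
    have hcong : Set.EqOn
        (fun r : ℝ => Complex.exp (-((κ : ℂ) / 2) * ((t : ℂ) - (r : ℂ))) * ξ r)
        (fun r : ℝ => ((-Real.sqrt γ * Real.exp (-(κ / 2) * t) : ℝ) : ℂ) *
          ((Real.exp ((κ + γ) / 2 * r) : ℝ) : ℂ)) (Set.Iic s) := by
      intro r hr
      simp only
      rw [hξ r, if_pos (le_trans hr hs)]
      push_cast
      calc Complex.exp (-((κ:ℂ) / 2) * ((t:ℂ) - r)) * (-(Real.sqrt γ : ℂ) *
              Complex.exp ((γ:ℂ) / 2 * r))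
          = -(Real.sqrt γ : ℂ) *
              Complex.exp (-((κ:ℂ) / 2) * ((t:ℂ) - r) + (γ:ℂ) / 2 * r) := by
            rw [Complex.exp_add]; ring
        _ = -(Real.sqrt γ : ℂ) * (Complex.exp (-((κ:ℂ) / 2) * t) *
              Complex.exp (((κ:ℂ) + γ) / 2 * r)) := by
            rw [← Complex.exp_add]; congr 1; ring
        _ = -(Real.sqrt γ : ℂ) * Complex.exp (-((κ:ℂ) / 2) * t) *
              Complex.exp (((κ:ℂ) + γ) / 2 * r) := by ring
    rw [setIntegral_congr_fun measurableSet_Iic hcong, MeasureTheory.integral_const_mul,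
      expMul_integral_C _ _ hb]
  have hexpC : ∀ x : ℝ, ((Real.exp x : ℝ) : ℂ) = Complex.exp (x : ℂ) := fun x =>
    Complex.ofReal_exp x
  have h1 : ∀ t : ℝ, t ≤ 0 →
      ν t = (((κ : ℂ) - (γ : ℂ)) / ((κ : ℂ) + (γ : ℂ))) * (Real.sqrt γ : ℂ) *
        Complex.exp ((γ / 2 : ℝ) * (t : ℂ)) := by
    intro t ht
    have hE : ((Real.exp (-(κ / 2) * t) : ℝ) : ℂ) * ((Real.exp ((κ + γ) / 2 * t) : ℝ) : ℂ)
        = Complex.exp ((γ / 2 : ℝ) * (t : ℂ)) := by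
      rw [← Complex.ofReal_mul, ← Real.exp_add, Complex.ofReal_exp]
      congr 1
      push_cast; ring
    rw [hν t, hξ t, if_pos ht, key t t ht, ← hE]
    push_cast
    field_simp
    ring
  have h2 : ∀ t : ℝ, 0 < t →
      ν t = (2 * (κ : ℂ) * (Real.sqrt γ : ℂ) / ((κ : ℂ) + (γ : ℂ))) *
        Complex.exp (-((κ : ℂ) / 2) * (t : ℂ)) := by
    intro t ht
    have hred : (∫ r in Set.Iic t, Complex.exp (-((κ : ℂ) / 2) * ((t : ℂ) - (r : ℂ))) * ξ r)
        = ∫ r in Set.Iic (0:ℝ), Complex.exp (-((κ : ℂ) / 2) * ((t : ℂ) - (r : ℂ))) * ξ r := by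
      refine setIntegral_eq_of_subset_of_ae_diff_eq_zero measurableSet_Iic.nullMeasurableSet
        (Set.Iic_subset_Iic.2 ht.le) (Filter.Eventually.of_forall fun r hr => ?_)
      have hr0 : ¬ r ≤ 0 := fun h => hr.2 h
      rw [hξ r, if_neg hr0, mul_zero]
    have hE : ((Real.exp (-(κ / 2) * t) : ℝ) : ℂ) = Complex.exp (-((κ:ℂ)/2) * (t:ℂ)) := by
      rw [Complex.ofReal_exp]; congr 1; push_cast; ring
    rw [hν t, hξ t, if_neg (not_le.2 ht), hred, key t 0 le_rfl]
    push_cast [hE]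
    simp only [mul_zero, Real.exp_zero, Complex.exp_zero]
    field_simp
    ring
  refine ⟨h1, h2, fun hgk => ⟨fun t ht => ?_, fun t ht => ?_⟩⟩
  · rw [h1 t ht, hgk]; simp
  · rw [h2 t ht, hgk]
    congr 1
    have hk2 : (κ:ℂ) + κ ≠ 0 := by rw [hgk] at hsum; exact hsum
    have hkC : (κ:ℂ) ≠ 0 := Complex.ofReal_ne_zero.2 hκ.ne'
    field_simp
    ring
end
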